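/- arXiv:2401.14927 — 3 statements merged into one kernel-verified Lean document; each statement's English description precedes it below -/
import Mathlib

section
/- For any Eulerian digraph D, any vertex r, and any k, the number of k-spanning trees of D rooted at r equals the number of k-spanning trees of the transpose D^T rooted at r. -/
open Classical

/-- A finite multidigraph: finite vertex and edge types with initial and final
vertex maps. -/
structure Multidigraph where
  V : Type
  E : Type
  [fintV : Fintype V]
  [fintE : Fintype E]
  first : E → V
  last : E → V

attribute [instance] Multidigraph.fintV Multidigraph.fintE

namespace Multidigraph

variable (D : Multidigraph)

/-- The out-degree of a vertex. -/
noncomputable def outdeg (v : D.V) : ℕ := Nat.card {e : D.E // D.first e = v}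

/-- The in-degree of a vertex. -/
noncomputable def indeg (v : D.V) : ℕ := Nat.card {e : D.E // D.last e = v}

/-- Undirected adjacency using only edges in `T`. -/
def Adj (T : Set D.E) (a b : D.V) : Prop :=
  ∃ e ∈ T, (D.first e = a ∧ D.last e = b) ∨ (D.first e = b ∧ D.last e = a)

/-- Undirected reachability using only edges in `T`. -/
def Reach (T : Set D.E) : D.V → D.V → Prop := Relation.ReflTransGen (D.Adj T)

/-- The underlying undirected graph is connected. -/
def Connected : Prop := ∀ a b : D.V, D.Reach Set.univ a b

/-- An Eulerian digraph: connected and with in-degree equal to out-degree at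
every vertex. -/
def Eulerian : Prop := D.Connected ∧ ∀ v : D.V, D.indeg v = D.outdeg v

/-- `T` is a spanning tree of the underlying undirected graph: it connects all
vertices and has `|V| - 1` edges. -/
def IsSpanningTree (T : Set D.E) : Prop :=
  (∀ a b : D.V, D.Reach T a b) ∧ Nat.card T = Nat.card D.V - 1

/-- The out-degree of `v` in the subgraph `T` after reversing the orientations
of the edges in `S`. -/
noncomputable def outdegRev (T S : Set D.E) (v : D.V) : ℕ :=
  Nat.card {e : D.E // (e ∈ T \ S ∧ D.first e = v) ∨ (e ∈ S ∧ D.last e = v)}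

/-- `T` becomes an oriented spanning tree rooted at `r` (every vertex has a
unique directed path to `r`, i.e. every non-root vertex has out-degree `1` and
the root has out-degree `0` in the tree) after reversing exactly the edges of
`S ⊆ T`. -/
def IsOrientedSpanningTreeRev (T S : Set D.E) (r : D.V) : Prop :=
  D.IsSpanningTree T ∧ S ⊆ T ∧ (∀ v : D.V, v ≠ r → D.outdegRev T S v = 1) ∧
    D.outdegRev T S r = 0

/-- `T` is an oriented spanning tree rooted at `r`: every vertex has a unique
directed path to `r`. -/
def IsOrientedSpanningTree (T : Set D.E) (r : D.V) : Prop :=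
  D.IsOrientedSpanningTreeRev T ∅ r

/-- `T` is a `k`-spanning tree rooted at `r`: reversing the orientation of
exactly `k` of its edges yields an oriented spanning tree rooted at `r`. -/
def IsKSpanningTree (T : Set D.E) (r : D.V) (k : ℕ) : Prop :=
  ∃ S : Set D.E, Nat.card S = k ∧ D.IsOrientedSpanningTreeRev T S r

/-- `c D k r` is the number of `k`-spanning trees of `D` rooted at `r`. -/
noncomputable def c (k : ℕ) (r : D.V) : ℕ :=
  Nat.card {T : Set D.E // D.IsKSpanningTree T r k}

/-- The transpose digraph: every edge reversed. -/
def transpose : Multidigraph := { D with first := D.last, last := D.first }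

set_option linter.dupNamespace false

variable {D : Multidigraph}

lemma adj_symm {T : Set D.E} {a b : D.V} (h : D.Adj T a b) : D.Adj T b a := by
  obtain ⟨e, he, hor⟩ := h
  exact ⟨e, he, hor.symm⟩

lemma reach_refl {T : Set D.E} {a : D.V} : D.Reach T a a := Relation.ReflTransGen.refl

lemma reach_symm {T : Set D.E} {a b : D.V} (h : D.Reach T a b) : D.Reach T b a :=
  haveI : Std.Symm (D.Adj T) := ⟨fun _ _ => adj_symm⟩
  @Std.Symm.symm _ (Relation.ReflTransGen (D.Adj T)) inferInstance _ _ h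

lemma reach_trans {T : Set D.E} {a b c : D.V} (h : D.Reach T a b) (h' : D.Reach T b c) :
    D.Reach T a c := Relation.ReflTransGen.trans h h'

lemma reach_mono {T T' : Set D.E} (hTT : T ⊆ T') {a b : D.V} (h : D.Reach T a b) :
    D.Reach T' a b :=
  Relation.ReflTransGen.mono (r := D.Adj T) (p := D.Adj T') (fun _ _ ⟨e, he, ho⟩ => ⟨e, hTT he, ho⟩) _ _ h

/-- The reachability setoid. -/
def reachSetoid (D : Multidigraph) (T : Set D.E) : Setoid D.V :=
  ⟨D.Reach T, ⟨fun _ => reach_refl, reach_symm, reach_trans⟩⟩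

lemma rs_sound {T : Set D.E} {a b : D.V} (h : D.Reach T a b) :
    Quotient.mk (D.reachSetoid T) a = Quotient.mk (D.reachSetoid T) b :=
  Quot.sound h

lemma rs_exact {T : Set D.E} {a b : D.V}
    (h : Quotient.mk (D.reachSetoid T) a = Quotient.mk (D.reachSetoid T) b) :
    D.Reach T a b :=
  Quotient.exact h

lemma reach_empty {a b : D.V} (h : D.Reach (↑(∅ : Finset D.E)) a b) : a = b := by
  induction h with
  | refl => rfl
  | tail _ hadj ih =>
      obtain ⟨e, he, _⟩ := hadj
      simp at he

lemma reach_insert_split {s : Finset D.E} {e : D.E} {a b : D.V}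
    (h : D.Reach (↑(insert e s)) a b) :
    D.Reach (↑s) a b ∨
      ((D.Reach (↑s) a (D.first e) ∨ D.Reach (↑s) a (D.last e)) ∧
       (D.Reach (↑s) b (D.first e) ∨ D.Reach (↑s) b (D.last e))) := by
  induction h using Relation.ReflTransGen.head_induction_on with
  | refl => exact Or.inl reach_refl
  | head hadj _ ih =>
      rename_i x y _
      obtain ⟨e', he', hor⟩ := hadj
      rw [Finset.coe_insert, Set.mem_insert_iff] at he'
      rcases he' with heq | he's
      · -- the step uses the new edge `e`; so `x` is an endpoint of `e`
        subst heq
        have hx : D.Reach (↑s) x (D.first e') ∨ D.Reach (↑s) x (D.last e') := by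
          rcases hor with ⟨h1, _⟩ | ⟨_, h2⟩
          · exact Or.inl (by rw [h1]; exact reach_refl)
          · exact Or.inr (by rw [h2]; exact reach_refl)
        have hy : D.Reach (↑s) y (D.first e') ∨ D.Reach (↑s) y (D.last e') := by
          rcases hor with ⟨_, h2⟩ | ⟨h1, _⟩
          · exact Or.inr (by rw [h2]; exact reach_refl)
          · exact Or.inl (by rw [h1]; exact reach_refl)
        rcases ih with hyb | ⟨hy', hb⟩
        · refine Or.inr ⟨hx, ?_⟩
          rcases hy with h | h
          · exact Or.inl (reach_trans (reach_symm hyb) h)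
          · exact Or.inr (reach_trans (reach_symm hyb) h)
        · exact Or.inr ⟨hx, hb⟩
      · -- the step uses an old edge
        have hxy : D.Reach (↑s) x y := Relation.ReflTransGen.single ⟨e', he's, hor⟩
        rcases ih with hyb | ⟨hy, hb⟩
        · exact Or.inl (reach_trans hxy hyb)
        · refine Or.inr ⟨?_, hb⟩
          rcases hy with h | h
          · exact Or.inl (reach_trans hxy h)
          · exact Or.inr (reach_trans hxy h)

lemma card_quot_le (s : Finset D.E) (e : D.E) :
    Nat.card (Quotient (D.reachSetoid ↑s)) ≤
      Nat.card (Quotient (D.reachSetoid ↑(insert e s))) + 1 := by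
  classical
  have hsub : (↑s : Set D.E) ⊆ ↑(insert e s) := by
    intro x hx; rw [Finset.coe_insert]; exact Set.mem_insert_of_mem _ hx
  have hwd : ∀ v w : D.V, (D.reachSetoid ↑s).r v w →
      (if D.Reach (↑s) v (D.first e) then (Sum.inr () : Quotient (D.reachSetoid ↑(insert e s)) ⊕ Unit)
        else Sum.inl (Quotient.mk _ v)) =
      (if D.Reach (↑s) w (D.first e) then (Sum.inr () : Quotient (D.reachSetoid ↑(insert e s)) ⊕ Unit)
        else Sum.inl (Quotient.mk _ w)) := by
    intro v w hvw
    have hvw' : D.Reach (↑s) v w := hvw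
    have hiff : D.Reach (↑s) v (D.first e) ↔ D.Reach (↑s) w (D.first e) :=
      ⟨fun h => reach_trans (reach_symm hvw') h, fun h => reach_trans hvw' h⟩
    by_cases hv : D.Reach (↑s) v (D.first e)
    · rw [if_pos hv, if_pos (hiff.mp hv)]
    · rw [if_neg hv, if_neg (fun h => hv (hiff.mpr h))]
      exact congrArg _ (rs_sound (reach_mono hsub hvw'))
  let J : Quotient (D.reachSetoid ↑s) → Quotient (D.reachSetoid ↑(insert e s)) ⊕ Unit :=
    Quotient.lift (fun v => if D.Reach (↑s) v (D.first e) then Sum.inr ()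
      else Sum.inl (Quotient.mk _ v)) hwd
  have hinj : Function.Injective J := by
    intro x y hxy
    induction x using Quotient.ind
    induction y using Quotient.ind
    rename_i v w
    simp only [J, Quotient.lift_mk] at hxy
    by_cases hv : D.Reach (↑s) v (D.first e) <;> by_cases hw : D.Reach (↑s) w (D.first e)
    · exact rs_sound (reach_trans hv (reach_symm hw))
    · rw [if_pos hv, if_neg hw] at hxy; exact absurd hxy (by simp)
    · rw [if_neg hv, if_pos hw] at hxy; exact absurd hxy (by simp)
    · rw [if_neg hv, if_neg hw] at hxy
      have h' : D.Reach (↑(insert e s)) v w := rs_exact (Sum.inl.inj hxy)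
      rcases reach_insert_split h' with h | ⟨hvv, hww⟩
      · exact rs_sound h
      · have hv' : D.Reach (↑s) v (D.last e) := hvv.resolve_left hv
        have hw' : D.Reach (↑s) w (D.last e) := hww.resolve_left hw
        exact rs_sound (reach_trans hv' (reach_symm hw'))
  calc Nat.card (Quotient (D.reachSetoid ↑s))
      ≤ Nat.card (Quotient (D.reachSetoid ↑(insert e s)) ⊕ Unit) :=
        Nat.card_le_card_of_injective J hinj
    _ = Nat.card (Quotient (D.reachSetoid ↑(insert e s))) + 1 := by simp [Nat.card_sum]

lemma card_V_le_aux (s : Finset D.E) :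
    Nat.card D.V ≤ Nat.card (Quotient (D.reachSetoid ↑s)) + s.card := by
  classical
  induction s using Finset.induction_on with
  | empty =>
      have hbij : Function.Bijective (Quotient.mk (D.reachSetoid ↑(∅ : Finset D.E))) := by
        constructor
        · intro a b hab
          exact reach_empty (rs_exact hab)
        · exact Quotient.exists_rep
      have := Nat.card_eq_of_bijective _ hbij
      simpa using this.le
  | @insert e s he ih =>
      calc Nat.card D.V ≤ Nat.card (Quotient (D.reachSetoid ↑s)) + s.card := ih
        _ ≤ (Nat.card (Quotient (D.reachSetoid ↑(insert e s))) + 1) + s.card :=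
            Nat.add_le_add_right (card_quot_le s e) _
        _ = Nat.card (Quotient (D.reachSetoid ↑(insert e s))) + (insert e s).card := by
            rw [Finset.card_insert_of_notMem he]; ring

/-- A set of edges connecting all vertices has at least `|V| - 1` elements. -/
lemma card_V_le_card_connecting (T : Set D.E) (h : ∀ a b : D.V, D.Reach T a b)
    (v₀ : D.V) : Nat.card D.V ≤ Nat.card T + 1 := by
  classical
  obtain ⟨s, rfl⟩ : ∃ s : Finset D.E, (↑s : Set D.E) = T :=
    ⟨(Set.toFinite T).toFinset, Set.Finite.coe_toFinset _⟩
  have h1 : Nat.card (Quotient (D.reachSetoid ↑s)) = 1 := by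
    have hss : Subsingleton (Quotient (D.reachSetoid ↑s)) := by
      constructor
      intro x y
      induction x using Quotient.ind
      induction y using Quotient.ind
      exact rs_sound (h _ _)
    have hne : Nonempty (Quotient (D.reachSetoid ↑s)) := ⟨Quotient.mk _ v₀⟩
    exact Nat.card_unique
  have h2 := card_V_le_aux (D := D) s
  rw [h1] at h2
  have h3 : Nat.card ↥(↑s : Set D.E) = s.card := by
    rw [Nat.card_coe_set_eq, Set.ncard_coe_finset]
  omega

/-! ### Arcs and selections -/

/-- The tail of an arc (edge with a direction flag; `true` means reversed). -/
def tl (D : Multidigraph) (a : D.E × Bool) : D.V := if a.2 then D.last a.1 else D.first a.1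

/-- The head of an arc. -/
def hd (D : Multidigraph) (a : D.E × Bool) : D.V := if a.2 then D.first a.1 else D.last a.1

/-- Arc reversal. -/
def arev (D : Multidigraph) (a : D.E × Bool) : D.E × Bool := (a.1, !a.2)

lemma tl_arev (a : D.E × Bool) : D.tl (D.arev a) = D.hd a := by
  cases a with | mk e b => cases b <;> simp [tl, hd, arev]

lemma hd_arev (a : D.E × Bool) : D.hd (D.arev a) = D.tl a := by
  cases a with | mk e b => cases b <;> simp [tl, hd, arev]

lemma same_edge {a a' : D.E × Bool} (h : a'.1 = a.1) : a' = a ∨ a' = D.arev a := by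
  cases a with | mk e b =>
  cases a' with | mk e' b' =>
  simp only at h
  subst h
  cases b <;> cases b' <;> simp [arev]

lemma adj_tl_hd {T : Set D.E} (a : D.E × Bool) (ha : a.1 ∈ T) :
    D.Adj T (D.tl a) (D.hd a) := by
  cases a with | mk e b =>
  cases b
  · exact ⟨e, ha, Or.inl ⟨rfl, rfl⟩⟩
  · exact ⟨e, ha, Or.inr ⟨rfl, rfl⟩⟩

variable (r : D.V)

/-- A selection assigns to each non-root vertex an arc with tail at it. -/
def IsSel (f : {v : D.V // v ≠ r} → D.E × Bool) : Prop := ∀ u, D.tl (f u) = u.1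

/-- The successor map of a selection. -/
noncomputable def step (f : {v : D.V // v ≠ r} → D.E × Bool) (v : D.V) : D.V :=
  if h : v = r then r else D.hd (f ⟨v, h⟩)

/-- Acyclicity: every vertex eventually reaches the root. -/
def Acyc (f : {v : D.V // v ≠ r} → D.E × Bool) : Prop :=
  ∀ v : D.V, ∃ m : ℕ, (step r f)^[m] v = r

/-- The set of edges used by a selection. -/
def Tof (f : {v : D.V // v ≠ r} → D.E × Bool) : Set D.E := Set.range fun u => (f u).1

/-- The set of reversed edges used by a selection. -/
def Sof (f : {v : D.V // v ≠ r} → D.E × Bool) : Set D.E := {e | ∃ u, f u = (e, true)}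

/-- The number of reversed arcs of a selection. -/
noncomputable def kof (f : {v : D.V // v ≠ r} → D.E × Bool) : ℕ :=
  Nat.card {u : {v : D.V // v ≠ r} // (f u).2 = true}

variable {r}
variable {f : {v : D.V // v ≠ r} → D.E × Bool}

lemma step_ne {v : D.V} (hv : v ≠ r) : step r f v = D.hd (f ⟨v, hv⟩) := dif_neg hv

lemma no_two_cycle (ha : Acyc r f) {x y : D.V} (hx : x ≠ r) (hy : y ≠ r)
    (hxy : step r f x = y) (hyx : step r f y = x) : False := by
  obtain ⟨m, hm⟩ := ha x
  have key : ∀ m : ℕ, (step r f)^[m] x = x ∨ (step r f)^[m] x = y := by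
    intro m
    induction m with
    | zero => exact Or.inl rfl
    | succ m ih =>
        rw [Function.iterate_succ_apply']
        rcases ih with h | h <;> rw [h]
        · exact Or.inr hxy
        · exact Or.inl hyx
  rcases key m with h | h
  · exact hx (h ▸ hm)
  · exact hy (h ▸ hm)

lemma no_fix (ha : Acyc r f) {x : D.V} (hx : x ≠ r) (hxx : step r f x = x) : False :=
  no_two_cycle ha hx hx hxx hxx

lemma sel_inj (hs : IsSel r f) (ha : Acyc r f) :
    Function.Injective (fun u => (f u).1) := by
  intro u v h
  rcases same_edge (a := f u) (a' := f v) h.symm with h' | h'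
  · apply Subtype.ext
    rw [← hs u, ← hs v, h']
  · exfalso
    have h1 : step r f u.1 = v.1 := by
      rw [step_ne u.2, ← hs v, h', tl_arev]
    have h2 : step r f v.1 = u.1 := by
      rw [step_ne v.2, h', hd_arev, hs u]
    exact no_two_cycle ha u.2 v.2 h1 h2

lemma reach_Tof (hs : IsSel r f) :
    ∀ (m : ℕ) (v : D.V), (step r f)^[m] v = r → D.Reach (Tof r f) v r := by
  intro m
  induction m with
  | zero => intro v hv; rw [show v = r from hv]; exact reach_refl
  | succ m ih =>
      intro v hv
      by_cases hvr : v = r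
      · rw [hvr]; exact reach_refl
      · rw [Function.iterate_succ_apply] at hv
        refine Relation.ReflTransGen.head ?_ (ih _ hv)
        have : D.Adj (Tof r f) (D.tl (f ⟨v, hvr⟩)) (D.hd (f ⟨v, hvr⟩)) :=
          adj_tl_hd _ ⟨⟨v, hvr⟩, rfl⟩
        rwa [hs ⟨v, hvr⟩, ← step_ne hvr] at this

lemma card_pred_one {α : Type*} {p : α → Prop} {x₀ : α} (h : ∀ x, p x ↔ x = x₀) :
    Nat.card {x // p x} = 1 := by
  rw [Nat.card_eq_one_iff_unique]
  constructor
  · constructor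
    intro a b
    apply Subtype.ext
    rw [(h a.1).mp a.2, (h b.1).mp b.2]
  · exact ⟨x₀, (h x₀).mpr rfl⟩

lemma card_pred_zero {α : Type*} {p : α → Prop} (h : ∀ x, ¬ p x) :
    Nat.card {x // p x} = 0 :=
  @Nat.card_of_isEmpty _ ⟨fun x => h x.1 x.2⟩

lemma card_Vp : Nat.card {v : D.V // v ≠ r} = Nat.card D.V - 1 := by
  classical
  rw [Nat.card_eq_fintype_card, Nat.card_eq_fintype_card]
  have h1 : Fintype.card {v : D.V // ¬ (v = r)} = Fintype.card D.V - Fintype.card {v : D.V // v = r} :=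
    Fintype.card_subtype_compl _
  rw [Fintype.card_subtype_eq] at h1
  convert h1 using 2

/-! ### From selections to oriented spanning trees -/

lemma Sof_subset_Tof : Sof r f ⊆ Tof r f := fun e ⟨u, hu⟩ =>
  ⟨u, show (f u).1 = e by rw [hu]⟩

lemma card_Sof (hinj : Function.Injective fun u => (f u).1) :
    Nat.card (Sof r f) = kof r f := by
  have hbij : Function.Bijective
      (fun u : {u : {v : D.V // v ≠ r} // (f u).2 = true} =>
        (⟨(f u.1).1, u.1, Prod.ext rfl u.2⟩ : Sof r f)) := by
    constructor
    · intro u v huv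
      have : (f u.1).1 = (f v.1).1 := congrArg Subtype.val huv
      exact Subtype.ext (hinj this)
    · rintro ⟨e, u, hu⟩
      exact ⟨⟨u, show (f u).2 = true by rw [hu]⟩, Subtype.ext (show (f u).1 = e by rw [hu])⟩
  exact (Nat.card_eq_of_bijective _ hbij).symm

lemma card_Tof (hinj : Function.Injective fun u => (f u).1) :
    Nat.card (Tof r f) = Nat.card D.V - 1 := by
  have h1 : Nat.card (Tof r f) = Nat.card {v : D.V // v ≠ r} :=
    Nat.card_range_of_injective hinj
  rw [h1, card_Vp]

lemma flag_false_of_not_memS {e : D.E} {u' : {v : D.V // v ≠ r}}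
    (hu' : (f u').1 = e) (heS : e ∉ Sof r f) : (f u').2 = false := by
  cases hcase : (f u').2
  · rfl
  · exact absurd ⟨u', Prod.ext hu' hcase⟩ heS

theorem dir1 (hs : IsSel r f) (ha : Acyc r f) :
    D.IsOrientedSpanningTreeRev (Tof r f) (Sof r f) r := by
  have hinj := sel_inj hs ha
  refine ⟨⟨?_, card_Tof hinj⟩, Sof_subset_Tof, ?_, ?_⟩
  · intro a b
    obtain ⟨ma, hma⟩ := ha a
    obtain ⟨mb, hmb⟩ := ha b
    exact reach_trans (reach_Tof hs ma a hma) (reach_symm (reach_Tof hs mb b hmb))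
  · -- out-degree one at non-root vertices
    intro v hv
    apply card_pred_one (x₀ := (f ⟨v, hv⟩).1)
    intro e
    constructor
    · rintro (⟨⟨⟨u', hu'⟩, heS⟩, hfe⟩ | ⟨⟨u'', hu''⟩, hle⟩)
      · -- e ∈ T \ S with first e = v
        have hb' : (f u').2 = false := flag_false_of_not_memS hu' heS
        have : u'.1 = v := by
          have := hs u'
          rw [tl, hb'] at this
          simp at this
          rw [← this, show (f u').1 = e from hu', hfe]
        have : u' = ⟨v, hv⟩ := Subtype.ext this
        rw [← hu', this]
      · -- e ∈ S with last e = v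
        have : u''.1 = v := by
          have := hs u''
          rw [tl, hu''] at this
          simp at this
          rw [← this, hle]
        have : u'' = ⟨v, hv⟩ := Subtype.ext this
        have he : e = (f u'').1 := by rw [hu'']
        rw [he, this]
    · rintro rfl
      set u₀ : {v : D.V // v ≠ r} := ⟨v, hv⟩ with hu₀
      by_cases hb : (f u₀).2 = true
      · refine Or.inr ⟨⟨u₀, Prod.ext rfl hb⟩, ?_⟩
        have := hs u₀
        rw [tl, hb] at this
        simpa using this
      · have hb' : (f u₀).2 = false := by simpa using hb
        refine Or.inl ⟨⟨⟨u₀, rfl⟩, ?_⟩, ?_⟩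
        · rintro ⟨u', hu'⟩
          have : u' = u₀ := hinj (show (f u').1 = (f u₀).1 by rw [hu'])
          rw [this] at hu'
          rw [hu'] at hb'
          simp at hb'
        · have := hs u₀
          rw [tl, hb'] at this
          simpa using this
  · -- out-degree zero at the root
    apply card_pred_zero
    rintro e (⟨⟨⟨u', hu'⟩, heS⟩, hfe⟩ | ⟨⟨u'', hu''⟩, hle⟩)
    · have hb' : (f u').2 = false := flag_false_of_not_memS hu' heS
      apply u'.2
      have := hs u'
      rw [tl, hb'] at this
      simp at this
      rw [← this, show (f u').1 = e from hu', hfe]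
    · apply u''.2
      have := hs u''
      rw [tl, hu''] at this
      simp at this
      rw [← this, hle]

/-! ### Uniqueness of the selection associated with a tree -/

theorem sel_unique {f f' : {v : D.V // v ≠ r} → D.E × Bool}
    (hs : IsSel r f) (hs' : IsSel r f') (ha : Acyc r f) (ha' : Acyc r f')
    (hT : Tof r f = Tof r f') : f = f' := by
  classical
  by_contra hne
  obtain ⟨u₀, hu₀⟩ : ∃ u, f u ≠ f' u := by
    by_contra hall
    push_neg at hall
    exact hne (funext hall)
  have hinj := sel_inj hs ha
  have core : ∀ (v : D.V) (hv : v ≠ r), (f' ⟨v, hv⟩).1 ≠ (f ⟨v, hv⟩).1 →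
      ∃ (h2 : step r f v ≠ r), f' ⟨step r f v, h2⟩ = D.arev (f ⟨v, hv⟩) := by
    intro v hv hne'
    have heT : (f ⟨v, hv⟩).1 ∈ Tof r f' := by rw [← hT]; exact ⟨⟨v, hv⟩, rfl⟩
    obtain ⟨u₁, hu₁⟩ := heT
    have hu₁' : (f' u₁).1 = (f ⟨v, hv⟩).1 := hu₁
    rcases same_edge (a := f ⟨v, hv⟩) (a' := f' u₁) hu₁' with hcase | hcase
    · exfalso
      have hu₁v : u₁ = ⟨v, hv⟩ := by
        apply Subtype.ext
        rw [← hs' u₁, hcase, hs ⟨v, hv⟩]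
      rw [hu₁v] at hcase
      exact hne' (congrArg Prod.fst hcase)
    · have h2v : u₁.1 = step r f v := by
        rw [← hs' u₁, hcase, tl_arev, step_ne hv]
      refine ⟨h2v ▸ u₁.2, ?_⟩
      have he : (⟨step r f v, h2v ▸ u₁.2⟩ : {v : D.V // v ≠ r}) = u₁ :=
        Subtype.ext h2v.symm
      rw [he, hcase]
  have Q : ∀ i : ℕ, ∃ (h1 : (step r f)^[i] u₀.1 ≠ r) (h2 : (step r f)^[i+1] u₀.1 ≠ r),
      f' ⟨(step r f)^[i+1] u₀.1, h2⟩ = D.arev (f ⟨(step r f)^[i] u₀.1, h1⟩) := by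
    intro i
    induction i with
    | zero =>
        have hb : (f' u₀).1 ≠ (f u₀).1 := by
          intro heq
          rcases same_edge (a := f u₀) (a' := f' u₀) heq with hc | hc
          · exact hu₀ hc.symm
          · have hfix : step r f u₀.1 = u₀.1 := by
              have := hs' u₀
              rw [hc, tl_arev] at this
              rw [step_ne u₀.2]
              exact this
            exact no_fix ha u₀.2 hfix
        obtain ⟨h2, hQ⟩ := core u₀.1 u₀.2 hb
        simp only [Function.iterate_zero_apply, zero_add, Function.iterate_one]
        exact ⟨u₀.2, h2, hQ⟩
    | succ i ih =>
        obtain ⟨h1, h2, hQ⟩ := ih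
        have hstep : (step r f)^[i+1] u₀.1 = step r f ((step r f)^[i] u₀.1) :=
          Function.iterate_succ_apply' _ _ _
        have hvv' : (step r f)^[i] u₀.1 ≠ (step r f)^[i+1] u₀.1 := by
          intro hcontra
          rw [hstep] at hcontra
          exact no_fix ha h1 hcontra.symm
        have hne' : (f' ⟨(step r f)^[i+1] u₀.1, h2⟩).1 ≠ (f ⟨(step r f)^[i+1] u₀.1, h2⟩).1 := by
          rw [hQ]
          intro heq
          have := hinj heq
          exact hvv' (congrArg Subtype.val this)
        obtain ⟨h3, hQ'⟩ := core _ h2 hne'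
        have hstep2 : (step r f)^[i+1+1] u₀.1 = step r f ((step r f)^[i+1] u₀.1) :=
          Function.iterate_succ_apply' _ _ _
        refine ⟨h2, ?_, ?_⟩
        · rw [hstep2]; exact h3
        · have he : (⟨(step r f)^[i+1+1] u₀.1, hstep2 ▸ h3⟩ : {v : D.V // v ≠ r}) =
              ⟨step r f ((step r f)^[i+1] u₀.1), h3⟩ := Subtype.ext hstep2
          rw [he]
          exact hQ'
  obtain ⟨m, hm⟩ := ha u₀.1
  obtain ⟨h1, -, -⟩ := Q m
  exact h1 hm

/-! ### From oriented spanning trees to selections -/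

theorem dir2 {T S : Set D.E} (h : D.IsOrientedSpanningTreeRev T S r) :
    ∃ f : {v : D.V // v ≠ r} → D.E × Bool,
      IsSel r f ∧ Acyc r f ∧ Tof r f = T ∧ Sof r f = S := by
  classical
  obtain ⟨⟨hreach, hcardT⟩, hST, hdeg1, hdeg0⟩ := h
  have hex : ∀ u : {v : D.V // v ≠ r}, ∃ e : D.E,
      ((e ∈ T \ S ∧ D.first e = u.1) ∨ (e ∈ S ∧ D.last e = u.1)) ∧
      ∀ e', ((e' ∈ T \ S ∧ D.first e' = u.1) ∨ (e' ∈ S ∧ D.last e' = u.1)) → e' = e := by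
    intro u
    have h1 := hdeg1 u.1 u.2
    rw [outdegRev, Nat.card_eq_one_iff_unique] at h1
    obtain ⟨hsub, ⟨e, he⟩⟩ := h1
    exact ⟨e, he, fun e' he' => congrArg Subtype.val (hsub.allEq ⟨e', he'⟩ ⟨e, he⟩)⟩
  choose g hg hgu using hex
  set f : {v : D.V // v ≠ r} → D.E × Bool :=
    fun u => (g u, if g u ∈ S then true else false) with hf
  have hfst : ∀ u, (f u).1 = g u := fun u => rfl
  have hgT : ∀ u, g u ∈ T := by
    intro u
    rcases hg u with ⟨⟨h1, _⟩, _⟩ | ⟨h1, _⟩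
    · exact h1
    · exact hST h1
  have hsel : IsSel r f := by
    intro u
    by_cases hSu : g u ∈ S
    · have h2 := (hg u).resolve_left (fun hl => (Set.notMem_of_mem_sdiff hl.1) hSu)
      simp only [hf, tl, hSu, if_true]
      exact h2.2
    · have h2 := (hg u).resolve_right (fun hr => hSu hr.1)
      simp only [hf, tl, hSu, if_false]
      exact h2.2
  have finj : Function.Injective fun u => (f u).1 := by
    intro u v huv
    have huv' : g u = g v := huv
    have hfeq : f u = f v := by simp only [hf, huv']
    apply Subtype.ext
    rw [← hsel u, ← hsel v, hfeq]
  have hTsub : Tof r f ⊆ T := by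
    rintro e ⟨u, hu⟩
    rw [← hu]
    exact hgT u
  have hTof : Tof r f = T := by
    apply Set.eq_of_subset_of_ncard_le hTsub
    rw [← Nat.card_coe_set_eq, ← Nat.card_coe_set_eq, hcardT, card_Tof finj]
  have hsur : ∀ e ∈ T, ∃ u, g u = e := by
    intro e he
    rw [← hTof] at he
    obtain ⟨u, hu⟩ := he
    exact ⟨u, hu⟩
  have hSof : Sof r f = S := by
    ext e
    constructor
    · rintro ⟨u, hu⟩
      have h1 : g u = e := congrArg Prod.fst hu
      have h2 : (if g u ∈ S then true else false) = true := congrArg Prod.snd hu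
      by_cases hSu : g u ∈ S
      · exact h1 ▸ hSu
      · rw [if_neg hSu] at h2; exact absurd h2 (by simp)
    · intro heS
      obtain ⟨u, hu⟩ := hsur e (hST heS)
      refine ⟨u, ?_⟩
      simp only [hf, hu, if_pos heS]
  refine ⟨f, hsel, ?_, hTof, hSof⟩
  -- acyclicity
  by_contra hna
  obtain ⟨v₀, hv₀⟩ : ∃ v : D.V, ∀ m : ℕ, (step r f)^[m] v ≠ r := by
    rw [Acyc] at hna
    push_neg at hna
    exact hna
  set st := step r f with hst
  obtain ⟨i0, p, hp, hper⟩ : ∃ i p : ℕ, 0 < p ∧ st^[p] (st^[i] v₀) = st^[i] v₀ := by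
    obtain ⟨i, j, hij, hije⟩ := Finite.exists_ne_map_eq_of_infinite (fun n : ℕ => st^[n] v₀)
    rcases Nat.lt_or_ge i j with hlt | hge
    · exact ⟨i, j - i, by omega, by
        rw [← Function.iterate_add_apply, (by omega : j - i + i = j)]; exact hije.symm⟩
    · have hlt : j < i := by omega
      exact ⟨j, i - j, by omega, by
        rw [← Function.iterate_add_apply, (by omega : i - j + j = i)]; exact hije⟩
  set y := st^[i0] v₀ with hy
  have hyr : ∀ m, st^[m] y ≠ r := fun m => by
    rw [hy, ← Function.iterate_add_apply]; exact hv₀ _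
  have hPex : ∃ q, 0 < q ∧ st^[q] y = y := ⟨p, hp, hper⟩
  obtain ⟨hqpos, hqy⟩ := Nat.find_spec hPex
  set q := Nat.find hPex with hqdef
  have hqmin : ∀ i, 0 < i → i < q → st^[i] y ≠ y := fun i hi1 hi2 hiy =>
    Nat.find_min hPex hi2 ⟨hi1, hiy⟩
  have hyne : y ≠ r := hyr 0
  set e₀ := g ⟨y, hyne⟩ with he₀
  have he₀T : e₀ ∈ T := hgT _
  have hstepm : ∀ m : ℕ, st^[m+1] y = D.hd (f ⟨st^[m] y, hyr m⟩) := by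
    intro m
    rw [Function.iterate_succ_apply']
    exact step_ne (hyr m)
  have claim1' : ∀ m : ℕ, m + 1 ≤ q → D.Reach (T \ {e₀}) (st y) (st^[m+1] y) := by
    intro m
    induction m with
    | zero => intro _; rw [Function.iterate_one]; exact reach_refl
    | succ m ih =>
        intro hmq
        refine Relation.ReflTransGen.tail (ih (by omega)) ?_
        have hmem : (f ⟨st^[m+1] y, hyr (m+1)⟩).1 ∈ T \ {e₀} := by
          refine ⟨hgT _, ?_⟩
          rw [Set.mem_singleton_iff, hfst, he₀]
          intro hcontra
          have := finj (a₁ := ⟨st^[m+1] y, hyr (m+1)⟩) (a₂ := ⟨y, hyne⟩)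
            (show (f ⟨st^[m+1] y, hyr (m+1)⟩).1 = (f ⟨y, hyne⟩).1 by
              rw [hfst, hfst]; exact hcontra)
          have := congrArg Subtype.val this
          exact hqmin (m+1) (by omega) (by omega) this
        have hadj := adj_tl_hd (T := T \ {e₀}) (f ⟨st^[m+1] y, hyr (m+1)⟩) hmem
        rw [hsel ⟨st^[m+1] y, hyr (m+1)⟩, ← hstepm (m+1)] at hadj
        exact hadj
  have c1 : D.Reach (T \ {e₀}) (st y) y := by
    have hc := claim1' (q - 1) (by omega)
    rw [(by omega : q - 1 + 1 = q), hqy] at hc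
    exact hc
  have c2 : D.Reach (T \ {e₀}) y (st y) := reach_symm c1
  have hend : (D.first e₀ = y ∧ D.last e₀ = st y) ∨ (D.first e₀ = st y ∧ D.last e₀ = y) := by
    have h1 : D.tl (f ⟨y, hyne⟩) = y := hsel _
    have h2 : D.hd (f ⟨y, hyne⟩) = st y := by
      rw [hst, step_ne hyne]
    by_cases hb : (f ⟨y, hyne⟩).2 = true
    · rw [tl, if_pos hb] at h1
      rw [hd, if_pos hb] at h2
      exact Or.inr ⟨h2, h1⟩
    · rw [tl, if_neg hb] at h1
      rw [hd, if_neg hb] at h2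
      exact Or.inl ⟨h1, h2⟩
  have claim2 : ∀ a b : D.V, D.Reach T a b → D.Reach (T \ {e₀}) a b := by
    intro a b hab
    induction hab with
    | refl => exact reach_refl
    | tail hh hadj ih =>
        rename_i x c
        obtain ⟨e, heT', hor⟩ := hadj
        by_cases hee : e = e₀
        · subst hee
          have hxy : ∀ u v : D.V, (u = y ∨ u = st y) → (v = y ∨ v = st y) →
              D.Reach (T \ {e₀}) u v := by
            rintro u v (rfl | rfl) (rfl | rfl)
            · exact reach_refl
            · exact c2
            · exact c1
            · exact reach_refl
          refine reach_trans ih (hxy x c ?_ ?_)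
          · rcases hor with ⟨h1, _⟩ | ⟨_, h2⟩ <;> rcases hend with ⟨he1, he2⟩ | ⟨he1, he2⟩
            · exact Or.inl (h1.symm.trans he1)
            · exact Or.inr (h1.symm.trans he1)
            · exact Or.inr (h2.symm.trans he2)
            · exact Or.inl (h2.symm.trans he2)
          · rcases hor with ⟨_, h2⟩ | ⟨h1, _⟩ <;> rcases hend with ⟨he1, he2⟩ | ⟨he1, he2⟩
            · exact Or.inr (h2.symm.trans he2)
            · exact Or.inl (h2.symm.trans he2)
            · exact Or.inl (h1.symm.trans he1)
            · exact Or.inr (h1.symm.trans he1)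
        · exact Relation.ReflTransGen.tail ih ⟨e, ⟨heT', hee⟩, hor⟩
  have hconn : ∀ a b : D.V, D.Reach (T \ {e₀}) a b := fun a b => claim2 a b (hreach a b)
  have hcount := card_V_le_card_connecting (T \ {e₀}) hconn r
  have hdiff : Nat.card ↥(T \ ({e₀} : Set D.E)) = Nat.card ↥T - 1 := by
    rw [Nat.card_coe_set_eq, Nat.card_coe_set_eq,
      Set.ncard_diff_singleton_of_mem he₀T]
  have hn2 : 2 ≤ Nat.card D.V := by
    have : Nontrivial D.V := ⟨⟨y, r, hyne⟩⟩
    rw [Nat.card_eq_fintype_card]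
    exact Fintype.one_lt_card
  omega

/-! ### Counting -/

theorem c_eq_card_sel (D : Multidigraph) (r : D.V) (k : ℕ) :
    D.c k r = Nat.card {f : {v : D.V // v ≠ r} → D.E × Bool //
      IsSel r f ∧ Acyc r f ∧ kof r f = k} := by
  classical
  have hbij : Function.Bijective
      (fun fp : {f : {v : D.V // v ≠ r} → D.E × Bool //
          IsSel r f ∧ Acyc r f ∧ kof r f = k} =>
        (⟨Tof r fp.1, Sof r fp.1,
          by rw [card_Sof (sel_inj fp.2.1 fp.2.2.1)]; exact fp.2.2.2,
          dir1 fp.2.1 fp.2.2.1⟩ : {T : Set D.E // D.IsKSpanningTree T r k})) := by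
    constructor
    · rintro ⟨f, hf1, hf2, hf3⟩ ⟨f', hf1', hf2', hf3'⟩ heq
      have hT : Tof r f = Tof r f' := congrArg Subtype.val heq
      exact Subtype.ext (sel_unique hf1 hf1' hf2 hf2' hT)
    · rintro ⟨T, S, hcard, hrev⟩
      obtain ⟨f, hsel, hacyc, hTof, hSof⟩ := dir2 hrev
      have hk : kof r f = k := by
        rw [← card_Sof (sel_inj hsel hacyc), hSof, hcard]
      exact ⟨⟨f, hsel, hacyc, hk⟩, Subtype.ext hTof⟩
  rw [c]
  exact (Nat.card_eq_of_bijective _ hbij).symm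

/-! ### The weighted Laplacian-style matrix -/

noncomputable def wArc {α : Type} (a : α × Bool) : Polynomial ℤ :=
  if a.2 then Polynomial.X else 1

noncomputable def Nmat (r : D.V) (p : {v : D.V // v ≠ r} → D.E × Bool) :
    Matrix {v : D.V // v ≠ r} {v : D.V // v ≠ r} (Polynomial ℤ) := fun u v =>
  (if u.1 = v.1 then 1 else 0) - (if D.hd (p u) = v.1 then 1 else 0)

noncomputable def Mmat (D : Multidigraph) (r : D.V) :
    Matrix {v : D.V // v ≠ r} {v : D.V // v ≠ r} (Polynomial ℤ) := fun u v =>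
  ∑ a : D.E × Bool, if D.tl a = u.1 then
    wArc a * ((if u.1 = v.1 then 1 else 0) - (if D.hd a = v.1 then 1 else 0)) else 0

theorem det_Mmat_eq (D : Multidigraph) (r : D.V) :
    (Mmat D r).det = ∑ p ∈ Fintype.piFinset (fun u : {v : D.V // v ≠ r} =>
        Finset.univ.filter (fun a : D.E × Bool => D.tl a = u.1)),
      (∏ u, wArc (p u)) * (Nmat r p).det := by
  classical
  have hM : Mmat D r = fun u => ∑ a ∈ Finset.univ.filter (fun a : D.E × Bool => D.tl a = u.1),
      (fun v => wArc a * ((if u.1 = v.1 then 1 else 0) - (if D.hd a = v.1 then 1 else 0))) := by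
    funext u v
    rw [Finset.sum_apply]
    rw [Mmat, Finset.sum_filter]
  calc (Mmat D r).det
      = ∑ p ∈ Fintype.piFinset (fun u : {v : D.V // v ≠ r} =>
          Finset.univ.filter (fun a : D.E × Bool => D.tl a = u.1)),
        Matrix.detRowAlternating (fun u v =>
          wArc (p u) * ((if u.1 = v.1 then 1 else 0) - (if D.hd (p u) = v.1 then 1 else 0))) := by
        rw [show (Mmat D r).det = Matrix.detRowAlternating (Mmat D r) from rfl, hM]
        exact (Matrix.detRowAlternating.toMultilinearMap).map_sum_finset _ _
    _ = ∑ p ∈ Fintype.piFinset (fun u : {v : D.V // v ≠ r} =>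
          Finset.univ.filter (fun a : D.E × Bool => D.tl a = u.1)),
        (∏ u, wArc (p u)) * (Nmat r p).det := by
        refine Finset.sum_congr rfl fun p _ => ?_
        have : Matrix.detRowAlternating (fun u v =>
            wArc (p u) * ((if u.1 = v.1 then 1 else 0) - (if D.hd (p u) = v.1 then 1 else 0)))
            = (Matrix.of fun u v => wArc (p u) * Nmat r p u v).det := rfl
        rw [this, Matrix.det_mul_column]

theorem detN_acyc {p : {v : D.V // v ≠ r} → D.E × Bool}
    (hs : IsSel r p) (ha : Acyc r p) : (Nmat r p).det = 1 := by
  classical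
  rw [Matrix.det_apply']
  refine (Finset.sum_eq_single 1 ?_ ?_).trans ?_
  · -- non-identity permutations contribute zero
    intro σ _ hσ
    have hzero : (∏ i : {v : D.V // v ≠ r}, Nmat r p (σ i) i) = 0 := by
      by_contra hprod
      have hfac : ∀ i, Nmat r p (σ i) i ≠ 0 := by
        intro i hi
        exact hprod (Finset.prod_eq_zero (Finset.mem_univ i) hi)
      have hmove : ∀ i, σ i ≠ i → D.hd (p (σ i)) = i.1 := by
        intro i hne
        have hne1 : ¬ (σ i).1 = i.1 := fun h => hne (Subtype.ext h)
        have h := hfac i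
        rw [Nmat, if_neg hne1] at h
        by_contra hhd
        rw [if_neg hhd] at h
        simp at h
      have key : ∀ j : {v : D.V // v ≠ r}, σ j ≠ j →
          step r p j.1 = (σ.symm j).1 ∧ σ (σ.symm j) ≠ σ.symm j := by
        intro j hj
        have hsymm : σ (σ.symm j) = j := σ.apply_symm_apply j
        have hmv : σ (σ.symm j) ≠ σ.symm j := by
          intro hcontra
          have h4 : j = σ.symm j := hsymm.symm.trans hcontra
          exact hj (by rw [h4]; exact hcontra)
        have := hmove (σ.symm j) hmv
        rw [hsymm] at this
        refine ⟨?_, hmv⟩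
        rw [step_ne j.2]
        exact this
      obtain ⟨j₀, hj₀⟩ : ∃ j, σ j ≠ j := by
        by_contra hall
        push_neg at hall
        exact hσ (Equiv.ext hall)
      have orbit : ∀ m : ℕ, ∃ j : {v : D.V // v ≠ r},
          σ j ≠ j ∧ (step r p)^[m] j₀.1 = j.1 := by
        intro m
        induction m with
        | zero => exact ⟨j₀, hj₀, rfl⟩
        | succ m ih =>
            obtain ⟨j, hj, heq⟩ := ih
            obtain ⟨hstep, hmv⟩ := key j hj
            exact ⟨σ.symm j, hmv, by
              rw [Function.iterate_succ_apply', heq, hstep]⟩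
      obtain ⟨m, hm⟩ := ha j₀.1
      obtain ⟨j, _, heq⟩ := orbit m
      rw [hm] at heq
      exact j.2 heq.symm
    rw [hzero]
    ring
  · intro h
    exact absurd (Finset.mem_univ _) h
  · -- identity term
    have hprod : (∏ i : {v : D.V // v ≠ r},
        Nmat r p ((1 : Equiv.Perm {v : D.V // v ≠ r}) i) i) = 1 := by
      apply Finset.prod_eq_one
      intro u _
      simp only [Equiv.Perm.one_apply]
      rw [Nmat]
      have h2 : ¬ D.hd (p u) = u.1 := by
        intro hcontra
        exact no_fix ha u.2 (by rw [step_ne u.2]; exact hcontra)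
      rw [if_pos rfl, if_neg h2]
      ring
    rw [hprod]
    simp

theorem prod_wArc {p : {v : D.V // v ≠ r} → D.E × Bool} :
    (∏ u, wArc (p u)) = Polynomial.X ^ (kof r p) := by
  classical
  rw [kof, Nat.card_eq_fintype_card, Fintype.card_subtype]
  have : ∀ u : {v : D.V // v ≠ r}, wArc (p u) =
      if (p u).2 = true then Polynomial.X else 1 := by
    intro u
    rw [wArc]
  rw [Finset.prod_congr rfl (fun u _ => this u), Finset.prod_ite]
  simp [Finset.prod_const]

theorem detN_cyc {p : {v : D.V // v ≠ r} → D.E × Bool}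
    (hs : IsSel r p) (hna : ¬ Acyc r p) : (Nmat r p).det = 0 := by
  classical
  apply Matrix.exists_vecMul_eq_zero_iff.mp
  obtain ⟨v₀, hv₀⟩ : ∃ v : D.V, ∀ m : ℕ, (step r p)^[m] v ≠ r := by
    rw [Acyc] at hna
    push_neg at hna
    exact hna
  set st := step r p with hst
  obtain ⟨i0, q, hq, hper⟩ : ∃ i q : ℕ, 0 < q ∧ st^[q] (st^[i] v₀) = st^[i] v₀ := by
    obtain ⟨i, j, hij, hije⟩ := Finite.exists_ne_map_eq_of_infinite (fun n : ℕ => st^[n] v₀)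
    rcases Nat.lt_or_ge i j with hlt | hge
    · exact ⟨i, j - i, by omega, by
        rw [← Function.iterate_add_apply, (by omega : j - i + i = j)]; exact hije.symm⟩
    · have hlt : j < i := by omega
      exact ⟨j, i - j, by omega, by
        rw [← Function.iterate_add_apply, (by omega : i - j + j = i)]; exact hije⟩
  set y := st^[i0] v₀ with hy
  have hqy : st^[q] y = y := hper
  have hyr : ∀ m, st^[m] y ≠ r := fun m => by
    rw [hy, ← Function.iterate_add_apply]; exact hv₀ _
  have hyne : y ≠ r := hyr 0
  set C : Set D.V := Set.range (fun m : ℕ => st^[m] y) with hC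
  have hyC : y ∈ C := ⟨0, rfl⟩
  have hCr : ∀ w ∈ C, w ≠ r := by
    rintro w ⟨m, hm⟩
    rw [← hm]
    exact hyr m
  have hCst : ∀ w ∈ C, st w ∈ C := by
    rintro w ⟨m, hm⟩
    exact ⟨m + 1, by
      show st^[m + 1] y = st w
      rw [Function.iterate_succ_apply', show st^[m] y = w from hm]⟩
  have hCsur : ∀ w ∈ C, ∃ w' ∈ C, st w' = w := by
    rintro w ⟨m, hm⟩
    refine ⟨st^[m + q - 1] y, ⟨m + q - 1, rfl⟩, ?_⟩
    have h1 : st (st^[m + q - 1] y) = st^[m + q] y := by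
      have h2 := (Function.iterate_succ_apply' st (m + q - 1) y).symm
      have h3 : (m + q - 1).succ = m + q := by omega
      rwa [h3] at h2
    rw [h1, Function.iterate_add_apply, hqy]
    exact hm
  -- `st` is injective on `C`
  have hψ : ∀ w : C, st w.1 ∈ C := fun w => hCst w.1 w.2
  set ψ : C → C := fun w => ⟨st w.1, hψ w⟩ with hψdef
  have hψsur : Function.Surjective ψ := by
    rintro ⟨w, hw⟩
    obtain ⟨w', hw', hstw⟩ := hCsur w hw
    exact ⟨⟨w', hw'⟩, Subtype.ext hstw⟩
  have hψinj : Function.Injective ψ := Finite.injective_iff_surjective.mpr hψsur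
  -- the left kernel vector
  set x : {v : D.V // v ≠ r} → Polynomial ℤ :=
    fun u => if u.1 ∈ C then 1 else 0 with hx
  refine ⟨x, ?_, ?_⟩
  · intro hzero
    have := congrFun hzero ⟨y, hyne⟩
    rw [hx] at this
    simp only [if_pos hyC] at this
    exact one_ne_zero (this.trans (Pi.zero_apply _))
  · funext v
    have hentry : ∀ u : {v : D.V // v ≠ r}, x u * Nmat r p u v =
        (if u.1 = v.1 ∧ u.1 ∈ C then 1 else 0) -
        (if u.1 ∈ C ∧ D.hd (p u) = v.1 then 1 else 0) := by
      intro u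
      rw [hx, Nmat]
      by_cases h1 : u.1 ∈ C <;> by_cases h2 : u.1 = v.1 <;>
        by_cases h3 : D.hd (p u) = v.1 <;> simp [h1, h2, h3] <;> ring
    have hvm : Matrix.vecMul x (Nmat r p) v = ∑ u, x u * Nmat r p u v := by
      rw [Matrix.vecMul, dotProduct]
    rw [hvm, Finset.sum_congr rfl (fun u _ => hentry u), Finset.sum_sub_distrib]
    have hA : (∑ u : {v : D.V // v ≠ r}, if u.1 = v.1 ∧ u.1 ∈ C then (1 : Polynomial ℤ) else 0)
        = if v.1 ∈ C then 1 else 0 := by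
      have hcong : ∀ u : {v : D.V // v ≠ r},
          (if u.1 = v.1 ∧ u.1 ∈ C then (1 : Polynomial ℤ) else 0) =
          if u = v then (if v.1 ∈ C then (1 : Polynomial ℤ) else 0) else 0 := by
        intro u
        by_cases h1 : u = v
        · subst h1
          simp
        · have h2 : ¬ (u.1 = v.1) := fun h => h1 (Subtype.ext h)
          simp [h1, h2]
      rw [Finset.sum_congr rfl (fun u _ => hcong u), Finset.sum_ite_eq' Finset.univ v
        (fun _ => if v.1 ∈ C then (1 : Polynomial ℤ) else 0), if_pos (Finset.mem_univ v)]
    have hB : (∑ u : {v : D.V // v ≠ r}, if u.1 ∈ C ∧ D.hd (p u) = v.1 then (1 : Polynomial ℤ) else 0)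
        = if v.1 ∈ C then 1 else 0 := by
      by_cases hvC : v.1 ∈ C
      · rw [if_pos hvC]
        obtain ⟨w', hw', hstw⟩ := hCsur v.1 hvC
        set u₀ : {v : D.V // v ≠ r} := ⟨w', hCr w' hw'⟩ with hu₀
        have hP₀ : u₀.1 ∈ C ∧ D.hd (p u₀) = v.1 := by
          refine ⟨hw', ?_⟩
          rw [← hstw, hst]
          exact (step_ne (hCr w' hw')).symm
        have huniq : ∀ u : {v : D.V // v ≠ r}, u.1 ∈ C ∧ D.hd (p u) = v.1 → u = u₀ := by
          rintro u ⟨huC, huhd⟩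
          have hstu : st u.1 = v.1 := by
            rw [hst, step_ne u.2]
            exact huhd
          have : ψ ⟨u.1, huC⟩ = ψ ⟨w', hw'⟩ := by
            apply Subtype.ext
            show st u.1 = st w'
            rw [hstu, hstw]
          have := congrArg Subtype.val (hψinj this)
          exact Subtype.ext this
        rw [Finset.sum_eq_single u₀ (fun b _ hb => by
          rw [if_neg]; exact fun hP => hb (huniq b hP))
          (fun h => absurd (Finset.mem_univ u₀) h)]
        rw [if_pos hP₀]
      · rw [if_neg hvC]
        apply Finset.sum_eq_zero
        rintro u -
        rw [if_neg]
        rintro ⟨huC, huhd⟩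
        apply hvC
        have hstu : st u.1 = v.1 := by
          rw [hst, step_ne u.2]
          exact huhd
        rw [← hstu]
        exact hCst u.1 huC
    rw [hA, hB, Pi.zero_apply, sub_self]

theorem coeff_det_Mmat (D : Multidigraph) (r : D.V) (k : ℕ) :
    ((Mmat D r).det).coeff k = (D.c k r : ℤ) := by
  classical
  rw [det_Mmat_eq]
  have hterm : ∀ p ∈ Fintype.piFinset (fun u : {v : D.V // v ≠ r} =>
      Finset.univ.filter (fun a : D.E × Bool => D.tl a = u.1)),
      (∏ u, wArc (p u)) * (Nmat r p).det =
        if Acyc r p then Polynomial.X ^ (kof r p) else 0 := by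
    intro p hp
    have hsel : IsSel r p := by
      intro u
      have := Fintype.mem_piFinset.mp hp u
      simpa using this
    by_cases hac : Acyc r p
    · rw [if_pos hac, detN_acyc hsel hac, prod_wArc, mul_one]
    · rw [if_neg hac, detN_cyc hsel hac, mul_zero]
  rw [Finset.sum_congr rfl hterm, Polynomial.finset_sum_coeff]
  have hterm2 : ∀ p ∈ Fintype.piFinset (fun u : {v : D.V // v ≠ r} =>
      Finset.univ.filter (fun a : D.E × Bool => D.tl a = u.1)),
      (if Acyc r p then (Polynomial.X : Polynomial ℤ) ^ kof r p else 0).coeff k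
        = if Acyc r p ∧ kof r p = k then (1 : ℤ) else 0 := by
    intro p _
    by_cases hac : Acyc r p
    · rw [if_pos hac, Polynomial.coeff_X_pow]
      by_cases hk : kof r p = k
      · rw [if_pos hk.symm, if_pos ⟨hac, hk⟩]
      · rw [if_neg (fun h => hk h.symm), if_neg (fun h => hk h.2)]
    · rw [if_neg hac, Polynomial.coeff_zero, if_neg (fun h => hac h.1)]
  rw [Finset.sum_congr rfl hterm2, Finset.sum_boole]
  have hset : (Fintype.piFinset (fun u : {v : D.V // v ≠ r} =>
      Finset.univ.filter (fun a : D.E × Bool => D.tl a = u.1))).filter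
        (fun p => Acyc r p ∧ kof r p = k) =
      Finset.univ.filter (fun p => IsSel r p ∧ Acyc r p ∧ kof r p = k) := by
    ext p
    simp only [Finset.mem_filter, Fintype.mem_piFinset, Finset.mem_univ, true_and]
    constructor
    · rintro ⟨h1, h2⟩
      refine ⟨fun u => by simpa using h1 u, h2⟩
    · rintro ⟨h1, h2⟩
      exact ⟨fun u => by simp [h1 u], h2⟩
  rw [hset]
  have hc := c_eq_card_sel D r k
  rw [Nat.card_eq_fintype_card, Fintype.card_subtype] at hc
  rw [← hc]

theorem Mmat_transpose (D : Multidigraph) (r : D.V)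
    (hEul : ∀ v : D.V, D.indeg v = D.outdeg v) :
    Mmat D.transpose r = (Mmat D r).transpose := by
  classical
  funext u v
  show Mmat D.transpose r u v = Mmat D r v u
  have hL : Mmat D.transpose r u v = ∑ a : D.E × Bool, if D.hd a = u.1 then
      wArc a * ((if u.1 = v.1 then 1 else 0) - (if D.tl a = v.1 then 1 else 0)) else 0 := rfl
  have hR : Mmat D r v u = ∑ a : D.E × Bool, if D.tl a = v.1 then
      wArc a * ((if v.1 = u.1 then 1 else 0) - (if D.hd a = u.1 then 1 else 0)) else 0 := rfl
  rw [hL, hR]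
  by_cases huv : u = v
  · subst huv
    have hL2 : (∑ a : D.E × Bool, if D.hd a = u.1 then
        wArc a * ((if u.1 = u.1 then 1 else 0) - (if D.tl a = u.1 then 1 else 0)) else 0)
        = ∑ a : D.E × Bool, if D.hd a = u.1 ∧ ¬ D.tl a = u.1 then wArc a else 0 := by
      refine Finset.sum_congr rfl fun a _ => ?_
      by_cases h1 : D.hd a = u.1 <;> by_cases h2 : D.tl a = u.1 <;>
        simp [h1, h2] <;> exact fun _ => Or.inr (sub_eq_zero.mpr (if_pos rfl).symm)
    have hR2 : (∑ a : D.E × Bool, if D.tl a = u.1 then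
        wArc a * ((if u.1 = u.1 then 1 else 0) - (if D.hd a = u.1 then 1 else 0)) else 0)
        = ∑ a : D.E × Bool, if D.tl a = u.1 ∧ ¬ D.hd a = u.1 then wArc a else 0 := by
      refine Finset.sum_congr rfl fun a _ => ?_
      by_cases h1 : D.tl a = u.1 <;> by_cases h2 : D.hd a = u.1 <;>
        simp [h1, h2] <;> exact fun _ => Or.inr (sub_eq_zero.mpr (if_pos rfl).symm)
    rw [hL2, hR2]
    rw [Fintype.sum_prod_type, Fintype.sum_prod_type]
    have hLe : ∀ e : D.E, (∑ b : Bool,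
        if D.hd (e, b) = u.1 ∧ ¬ D.tl (e, b) = u.1 then wArc (e, b) else 0) =
        (if D.first e = u.1 ∧ ¬ D.last e = u.1 then (Polynomial.X : Polynomial ℤ) else 0) +
        (if D.last e = u.1 ∧ ¬ D.first e = u.1 then (1 : Polynomial ℤ) else 0) := by
      intro e
      rw [Fintype.sum_bool]
      simp [hd, tl, wArc]
    have hRe : ∀ e : D.E, (∑ b : Bool,
        if D.tl (e, b) = u.1 ∧ ¬ D.hd (e, b) = u.1 then wArc (e, b) else 0) =
        (if D.last e = u.1 ∧ ¬ D.first e = u.1 then (Polynomial.X : Polynomial ℤ) else 0) +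
        (if D.first e = u.1 ∧ ¬ D.last e = u.1 then (1 : Polynomial ℤ) else 0) := by
      intro e
      rw [Fintype.sum_bool]
      simp [hd, tl, wArc]
    rw [Finset.sum_congr rfl fun e _ => hLe e, Finset.sum_congr rfl fun e _ => hRe e,
      Finset.sum_add_distrib, Finset.sum_add_distrib,
      ← Finset.sum_filter, ← Finset.sum_filter, ← Finset.sum_filter, ← Finset.sum_filter,
      Finset.sum_const, Finset.sum_const, Finset.sum_const, Finset.sum_const]
    have hcount : (Finset.univ.filter (fun e => D.first e = u.1 ∧ ¬ D.last e = u.1)).card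
        = (Finset.univ.filter (fun e => D.last e = u.1 ∧ ¬ D.first e = u.1)).card := by
      have h1 : Nat.card {e : D.E // D.last e = u.1} = Nat.card {e : D.E // D.first e = u.1} :=
        hEul u.1
      rw [Nat.card_eq_fintype_card, Nat.card_eq_fintype_card,
        Fintype.card_subtype, Fintype.card_subtype] at h1
      have h2 := Finset.card_filter_add_card_filter_not
        (s := Finset.univ.filter (fun e => D.first e = u.1)) (p := fun e => D.last e = u.1)
      have h3 := Finset.card_filter_add_card_filter_not
        (s := Finset.univ.filter (fun e => D.last e = u.1)) (p := fun e => D.first e = u.1)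
      rw [Finset.filter_filter, Finset.filter_filter] at h2 h3
      have h4 : (Finset.univ.filter (fun e => D.first e = u.1 ∧ D.last e = u.1)).card
          = (Finset.univ.filter (fun e => D.last e = u.1 ∧ D.first e = u.1)).card := by
        congr 1
        ext e
        simp [and_comm]
      omega
    rw [hcount]
  · have huv1 : ¬ u.1 = v.1 := fun h => huv (Subtype.ext h)
    have huv2 : ¬ v.1 = u.1 := fun h => huv1 h.symm
    refine Finset.sum_congr rfl fun a _ => ?_
    by_cases h1 : D.hd a = u.1 <;> by_cases h2 : D.tl a = v.1 <;>
      simp [h1, h2, huv1, huv2] <;> exact (if_pos rfl).trans ((congrArg Neg.neg (if_pos rfl)).trans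
        ((congrArg Neg.neg (if_pos rfl)).symm.trans (if_pos rfl).symm))

end Multidigraph


/-- For any Eulerian digraph `D`, any vertex `r`, and any `k`, the
number of `k`-spanning trees of `D` rooted at `r` equals the number of
`k`-spanning trees of the transpose `Dᵀ` rooted at `r`. -/
theorem stmt4 (D : Multidigraph) (hD : D.Eulerian) (r : D.V) (k : ℕ) :
    D.c k r = D.transpose.c k r := by
  have h2 : (Multidigraph.Mmat D.transpose r).det = (Multidigraph.Mmat D r).det := by
    rw [Multidigraph.Mmat_transpose D r hD.2]
    exact Matrix.det_transpose _
  have h3 := Multidigraph.coeff_det_Mmat D r k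
  have h4 := Multidigraph.coeff_det_Mmat D.transpose r k
  have h5 : (D.c k r : ℤ) = (D.transpose.c k r : ℤ) := by
    rw [← h3, ← h4, h2]
  exact_mod_cast h5
end

section
/- For any Eulerian digraph D and any k, the number of k-spanning trees of D rooted at r is independent of the choice of the root vertex r. -/
open Classical

namespace Aux6

open scoped Classical
open Polynomial

variable (D : Multidigraph)

abbrev R := Polynomial ℤ

/-- Doubled edges: `(e, false)` is `e` forward, `(e, true)` is `e` reversed. -/
abbrev EE (D : Multidigraph) := D.E × Bool

def tl (e : EE D) : D.V := if e.2 then D.last e.1 else D.first e.1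
def hd (e : EE D) : D.V := if e.2 then D.first e.1 else D.last e.1

noncomputable def wt (e : EE D) : R := if e.2 then Polynomial.X else 1

noncomputable def vecOf (e : EE D) : D.V → R :=
  fun w => (if tl D e = w then 1 else 0) - (if hd D e = w then 1 else 0)

/-- The weighted Laplacian. -/
noncomputable def Lap : Matrix D.V D.V R :=
  Matrix.of fun v w => ∑ e : EE D, if tl D e = v then wt D e * ((if v = w then 1 else 0) - (if hd D e = w then 1 else 0)) else 0

lemma row_sum_zero (v : D.V) : ∑ w, Lap D v w = 0 := by
  unfold Lap
  simp only [Matrix.of_apply]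
  rw [Finset.sum_comm]
  apply Finset.sum_eq_zero
  intro e _
  by_cases h : tl D e = v
  · simp only [h, if_true, ← Finset.mul_sum, Finset.sum_sub_distrib]
    rw [Finset.sum_ite_eq Finset.univ v (fun _ => (1:R)), Finset.sum_ite_eq Finset.univ (hd D e) (fun _ => (1:R))]
    simp
  · simp [h]

lemma card_first (w : D.V) : ((Finset.univ : Finset D.E).filter (fun e => D.first e = w)).card = D.outdeg w := by
  rw [Multidigraph.outdeg, Nat.card_eq_fintype_card, Fintype.card_subtype]

lemma card_last (w : D.V) : ((Finset.univ : Finset D.E).filter (fun e => D.last e = w)).card = D.indeg w := by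
  rw [Multidigraph.indeg, Nat.card_eq_fintype_card, Fintype.card_subtype]

lemma col_sum_zero (hD : ∀ v : D.V, D.indeg v = D.outdeg v) (w : D.V) :
    ∑ v, Lap D v w = 0 := by
  unfold Lap
  simp only [Matrix.of_apply]
  rw [Finset.sum_comm]
  have : ∀ e : EE D, ∑ v, (if tl D e = v then wt D e * ((if v = w then 1 else 0) - (if hd D e = w then 1 else 0)) else 0)
      = wt D e * ((if tl D e = w then 1 else 0) - (if hd D e = w then 1 else 0)) := by
    intro e
    rw [Finset.sum_ite_eq Finset.univ (tl D e)
      (fun v => wt D e * ((if v = w then 1 else 0) - (if hd D e = w then 1 else 0)))]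
    simp
  rw [Finset.sum_congr rfl (fun e _ => this e)]
  rw [Fintype.sum_prod_type]
  have key : ∀ e : D.E, ∑ b : Bool, wt D (e, b) * ((if tl D (e,b) = w then 1 else 0) - (if hd D (e,b) = w then 1 else 0))
      = (1 - Polynomial.X) * ((if D.first e = w then 1 else 0) - (if D.last e = w then (1:R) else 0)) := by
    intro e
    simp only [Fintype.sum_bool, wt, tl, hd, if_true, if_false, Bool.false_eq_true]
    ring
  rw [Finset.sum_congr rfl (fun e _ => key e), ← Finset.mul_sum, Finset.sum_sub_distrib]
  have h1 : ∑ e : D.E, (if D.first e = w then (1:R) else 0) = (D.outdeg w : R) := by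
    rw [Finset.sum_boole, card_first D w]
  have h2 : ∑ e : D.E, (if D.last e = w then (1:R) else 0) = (D.indeg w : R) := by
    rw [Finset.sum_boole, card_last D w]
  rw [h1, h2, hD w, sub_self, mul_zero]

end Aux6
namespace Aux6
open scoped Classical

variable {n : Type*} [Fintype n] [DecidableEq n]

lemma det_zero_of_row_sums_zero [Nonempty n] (A : Matrix n n (Polynomial ℤ))
    (h : ∀ v, ∑ w, A v w = 0) : A.det = 0 := by
  rw [← Matrix.exists_mulVec_eq_zero_iff]
  refine ⟨fun _ => 1, ?_, ?_⟩
  · intro hc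
    have := congrFun hc (Classical.arbitrary n)
    simp at this
  · funext v
    simpa [Matrix.mulVec, dotProduct] using h v

lemma adj_eq_of_row_sums_zero (A : Matrix n n (Polynomial ℤ))
    (h : ∀ v, ∑ w, A v w = 0) (i i' j : n) :
    A.adjugate i j = A.adjugate i' j := by
  by_cases hii : i = i'
  · rw [hii]
  rw [Matrix.adjugate_apply, Matrix.adjugate_apply]
  have key : (A.updateRow j (Pi.single i 1 - Pi.single i' 1)).det = 0 := by
    have : Nonempty n := ⟨i⟩
    apply det_zero_of_row_sums_zero
    intro v
    by_cases hv : v = j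
    · subst hv
      simp only [Matrix.updateRow_self, Pi.sub_apply, Finset.sum_sub_distrib]
      rw [Finset.sum_pi_single', Finset.sum_pi_single']
      simp
    · rw [show (A.updateRow j (Pi.single i 1 - Pi.single i' 1)) v = A v by
        funext w; rw [Matrix.updateRow_ne hv]]
      exact h v
  have expand := Matrix.det_updateRow_add A j (Pi.single i 1 - Pi.single i' 1) (Pi.single i' 1)
  rw [sub_add_cancel] at expand
  rw [expand, key, zero_add]

lemma adj_eq_of_col_sums_zero (A : Matrix n n (Polynomial ℤ))
    (h : ∀ w, ∑ v, A v w = 0) (i j j' : n) :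
    A.adjugate i j = A.adjugate i j' := by
  have hT : ∀ v, ∑ w, A.transpose v w = 0 := fun v => h v
  have := adj_eq_of_row_sums_zero A.transpose hT j j' i
  rw [← Matrix.adjugate_transpose] at this
  simpa [Matrix.transpose_apply] using this

lemma adj_diag_eq (A : Matrix n n (Polynomial ℤ))
    (hrow : ∀ v, ∑ w, A v w = 0) (hcol : ∀ w, ∑ v, A v w = 0) (r r' : n) :
    A.adjugate r r = A.adjugate r' r' := by
  rw [adj_eq_of_row_sums_zero A hrow r r' r, adj_eq_of_col_sums_zero A hcol r' r r']

end Aux6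
namespace Aux6
open scoped Classical
open Polynomial

variable (D : Multidigraph)

noncomputable def rowIdx (r v : D.V) : Finset (Option (EE D)) :=
  if v = r then {none} else (Finset.univ.filter (fun e : EE D => tl D e = v)).image some

noncomputable def uvec (r : D.V) (j : Option (EE D)) : D.V → R :=
  j.elim (Pi.single r 1) (vecOf D)

noncomputable def coefOf (j : Option (EE D)) : R := j.elim 1 (wt D)

noncomputable def gvec (r : D.V) (j : Option (EE D)) : D.V → R := coefOf D j • uvec D r j

lemma rows_decomp (r : D.V) :
    (Lap D).updateRow r (Pi.single r 1) =
      Matrix.of (fun v => ∑ j ∈ rowIdx D r v, gvec D r j) := by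
  apply Matrix.ext
  intro v w
  by_cases hv : v = r
  · subst hv
    rw [Matrix.updateRow_self]
    have h1 : rowIdx D v v = {none} := by rw [rowIdx, if_pos rfl]
    simp only [Matrix.of_apply, h1, Finset.sum_singleton, gvec, coefOf, uvec,
      Option.elim_none, one_smul]
  · rw [Matrix.updateRow_ne hv]
    simp only [Matrix.of_apply, rowIdx, if_neg hv, Lap]
    rw [Finset.sum_image (by intro x _ y _ h; exact Option.some_injective _ h)]
    rw [Finset.sum_apply, ← Finset.sum_filter]
    apply Finset.sum_congr rfl
    intro e he
    rw [Finset.mem_filter] at he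
    simp only [gvec, coefOf, uvec, Option.elim, vecOf, Pi.smul_apply, smul_eq_mul, he.2]

noncomputable def stp (f : D.V → Option (EE D)) : D.V → D.V := fun v => (f v).elim v (hd D)

def Acy (r : D.V) (f : D.V → Option (EE D)) : Prop := ∀ v, ∃ n, (stp D f)^[n] v = r

noncomputable def rev (f : D.V → Option (EE D)) : ℕ :=
  (Finset.univ.filter (fun v => (f v).elim false Prod.snd = true)).card

def Good (r : D.V) (f : D.V → Option (EE D)) : Prop :=
  f r = none ∧ ∀ v, v ≠ r → ∃ e : EE D, f v = some e ∧ tl D e = v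

lemma mem_piFinset_iff (r : D.V) (f : D.V → Option (EE D)) :
    f ∈ Fintype.piFinset (rowIdx D r) ↔ Good D r f := by
  rw [Fintype.mem_piFinset]
  constructor
  · intro h
    constructor
    · have := h r
      rw [rowIdx, if_pos rfl, Finset.mem_singleton] at this
      exact this
    · intro v hv
      have := h v
      rw [rowIdx, if_neg hv, Finset.mem_image] at this
      obtain ⟨e, he, hfe⟩ := this
      rw [Finset.mem_filter] at he
      exact ⟨e, hfe.symm, he.2⟩
  · rintro ⟨h1, h2⟩ v
    by_cases hv : v = r
    · subst hv; rw [rowIdx, if_pos rfl, Finset.mem_singleton, h1]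
    · obtain ⟨e, he, hte⟩ := h2 v hv
      rw [rowIdx, if_neg hv, Finset.mem_image]
      exact ⟨e, Finset.mem_filter.2 ⟨Finset.mem_univ _, hte⟩, he.symm⟩

noncomputable def Nmat (r : D.V) (f : D.V → Option (EE D)) : Matrix D.V D.V ℤ :=
  Matrix.of fun v w => if v = r then (if w = r then 1 else 0)
    else ((if v = w then 1 else 0) - (if stp D f v = w then 1 else 0))

lemma uvec_eq (r : D.V) (f : D.V → Option (EE D)) (hf : Good D r f) :
    (fun v => uvec D r (f v)) = fun v w => ((Nmat D r f).map (Int.cast : ℤ → R)) v w := by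
  funext v w
  by_cases hv : v = r
  · subst hv
    rw [hf.1]
    simp only [uvec, Option.elim, Nmat, Matrix.map_apply, Matrix.of_apply, if_pos rfl,
      Pi.single_apply]
    split <;> simp
  · obtain ⟨e, he, hte⟩ := hf.2 v hv
    have hstp : stp D f v = hd D e := by rw [stp, he]; rfl
    rw [he]
    simp only [uvec, Option.elim, vecOf, Nmat, Matrix.map_apply, Matrix.of_apply, if_neg hv,
      hte, hstp]
    split <;> split <;> simp

lemma stp_ne_self {D : Multidigraph} {r : D.V} {f : D.V → Option (EE D)}
    (hacy : Acy D r f) {v : D.V} (hv : v ≠ r) : stp D f v ≠ v := by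
  intro h
  obtain ⟨n, hn⟩ := hacy v
  rw [Function.iterate_fixed h n] at hn
  exact hv hn

noncomputable def ht {D : Multidigraph} {r : D.V} {f : D.V → Option (EE D)}
    (hacy : Acy D r f) (v : D.V) : ℕ := Nat.find (hacy v)

lemma ht_step {D : Multidigraph} {r : D.V} {f : D.V → Option (EE D)}
    (hacy : Acy D r f) {v : D.V} (hv : v ≠ r) : ht hacy (stp D f v) < ht hacy v := by
  have h0 : ht hacy v ≠ 0 := by
    intro h
    have := Nat.find_spec (hacy v)
    rw [ht] at h
    rw [h] at this
    exact hv this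
  obtain ⟨m, hm⟩ := Nat.exists_eq_succ_of_ne_zero h0
  have hspec : (stp D f)^[ht hacy v] v = r := Nat.find_spec (hacy v)
  rw [hm, Function.iterate_succ_apply] at hspec
  have : ht hacy (stp D f v) ≤ m := Nat.find_le hspec
  omega

lemma det_Nmat_acy (r : D.V) (f : D.V → Option (EE D)) (hacy : Acy D r f) :
    (Nmat D r f).det = 1 := by
  rw [Matrix.det_apply]
  rw [Finset.sum_eq_single (1 : Equiv.Perm D.V)]
  · have : ∀ v, Nmat D r f v v = 1 := by
      intro v
      by_cases hv : v = r
      · subst hv; simp [Nmat]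
      · simp [Nmat, if_neg hv, if_neg (stp_ne_self hacy hv)]
    simp only [Equiv.Perm.coe_one, id_eq]
    rw [Finset.prod_congr rfl (fun v _ => this v)]
    simp
  · intro σ _ hσ
    have hprod : ∏ v, Nmat D r f (σ v) v = 0 := by
      by_contra hne
      have hne' : ∀ v ∈ Finset.univ, Nmat D r f (σ v) v ≠ 0 := Finset.prod_ne_zero_iff.mp hne
      -- every factor nonzero
      have hfact : ∀ v, σ v ≠ v → (σ v ≠ r ∧ stp D f (σ v) = v) := by
        intro v hv
        have h1 := hne' v (Finset.mem_univ v)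
        by_cases hr : σ v = r
        · exfalso
          rw [Nmat, Matrix.of_apply, if_pos hr] at h1
          have hvv : v = r := by
            by_contra hvr
            rw [if_neg hvr] at h1
            exact h1 rfl
          exact hv (hr.trans hvv.symm)
        · refine ⟨hr, ?_⟩
          rw [Nmat, Matrix.of_apply, if_neg hr] at h1
          by_contra hstp
          rw [if_neg hv, if_neg hstp] at h1
          simp at h1
      -- pick maximal height element moved by σ
      have hBne : (Finset.univ.filter (fun v => σ v ≠ v)).Nonempty := by
        by_contra h
        rw [Finset.not_nonempty_iff_eq_empty, Finset.filter_eq_empty_iff] at h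
        apply hσ
        ext v : 1
        simpa using h (Finset.mem_univ v)
      obtain ⟨v, hvmem, hvmax⟩ := Finset.exists_max_image _ (ht hacy) hBne
      rw [Finset.mem_filter] at hvmem
      obtain ⟨hr, hstp⟩ := hfact v hvmem.2
      have huB : σ (σ v) ≠ σ v := by
        intro h
        exact hvmem.2 (σ.injective h)
      have hle := hvmax (σ v) (Finset.mem_filter.2 ⟨Finset.mem_univ _, huB⟩)
      have : ht hacy (stp D f (σ v)) < ht hacy (σ v) := ht_step hacy hr
      rw [hstp] at this
      omega
    rw [hprod, smul_zero]
  · intro h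
    exact absurd (Finset.mem_univ _) h

lemma det_Nmat_not_acy (r : D.V) (f : D.V → Option (EE D)) (h : ¬ Acy D r f) :
    (Nmat D r f).det = 0 := by
  rw [Acy] at h
  push_neg at h
  obtain ⟨v0, hv0⟩ := h
  obtain ⟨m, m', hne, heq⟩ := Finite.exists_ne_map_eq_of_infinite (fun n => (stp D f)^[n] v0)
  wlog hlt : m < m' generalizing m m'
  · exact this m' m hne.symm heq.symm (by omega)
  set g := stp D f with hg
  set u := g^[m] v0 with hu
  set p := m' - m with hp
  have hppos : 0 < p := by omega
  have hup : g^[p] u = u := by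
    rw [hu, ← Function.iterate_add_apply]
    have : p + m = m' := by omega
    rw [this, ← heq]
  set C := (Finset.range p).image (fun i => g^[i] u) with hC
  have hrC : ∀ x ∈ C, x ≠ r := by
    intro x hx
    rw [hC, Finset.mem_image] at hx
    obtain ⟨i, _, hi⟩ := hx
    rw [← hi, hu, ← Function.iterate_add_apply]
    exact hv0 (i + m)
  have huC : u ∈ C := by
    rw [hC, Finset.mem_image]
    exact ⟨0, Finset.mem_range.2 hppos, rfl⟩
  have himg : C.image g = C := by
    apply Finset.Subset.antisymm
    · intro x hx
      rw [Finset.mem_image] at hx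
      obtain ⟨y, hy, hyx⟩ := hx
      rw [hC, Finset.mem_image] at hy
      obtain ⟨i, hi, hiy⟩ := hy
      rw [Finset.mem_range] at hi
      rw [hC, Finset.mem_image]
      have hgy : g y = g^[i+1] u := by
        rw [← hiy]; exact (Function.iterate_succ_apply' g i u).symm
      by_cases hip : i + 1 = p
      · refine ⟨0, Finset.mem_range.2 hppos, ?_⟩
        rw [Function.iterate_zero_apply, ← hyx, hgy, hip, hup]
      · refine ⟨i + 1, Finset.mem_range.2 (by omega), ?_⟩
        rw [← hyx, hgy]
    · intro x hx
      rw [hC, Finset.mem_image] at hx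
      obtain ⟨i, hi, hix⟩ := hx
      rw [Finset.mem_range] at hi
      rw [Finset.mem_image]
      by_cases hi0 : i = 0
      · refine ⟨g^[p-1] u, ?_, ?_⟩
        · rw [hC, Finset.mem_image]; exact ⟨p - 1, Finset.mem_range.2 (by omega), rfl⟩
        · have hh : g (g^[p-1] u) = g^[p-1+1] u := (Function.iterate_succ_apply' g (p-1) u).symm
          rw [hh, show p - 1 + 1 = p from by omega, hup, ← hix, hi0,
            Function.iterate_zero_apply]
      · refine ⟨g^[i-1] u, ?_, ?_⟩
        · rw [hC, Finset.mem_image]; exact ⟨i - 1, Finset.mem_range.2 (by omega), rfl⟩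
        · have hh : g (g^[i-1] u) = g^[i-1+1] u := (Function.iterate_succ_apply' g (i-1) u).symm
          rw [hh, show i - 1 + 1 = i from by omega, hix]
  have hinj : Set.InjOn g C := Finset.injOn_of_card_image_eq (by rw [himg])
  rw [← Matrix.exists_vecMul_eq_zero_iff]
  refine ⟨fun v => if v ∈ C then (1:ℤ) else 0, ?_, ?_⟩
  · intro hcontra
    have := congrFun hcontra u
    rw [if_pos huC] at this
    simp at this
  · funext c
    show (∑ v, (if v ∈ C then (1:ℤ) else 0) * Nmat D r f v c) = 0
    have : ∀ v : D.V, (if v ∈ C then (1:ℤ) else 0) * Nmat D r f v c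
        = if v ∈ C then ((if v = c then 1 else 0) - (if g v = c then 1 else 0)) else 0 := by
      intro v
      by_cases hv : v ∈ C
      · rw [if_pos hv, if_pos hv, one_mul, Nmat, Matrix.of_apply, if_neg (hrC v hv)]
      · rw [if_neg hv, if_neg hv, zero_mul]
    rw [Finset.sum_congr rfl (fun v _ => this v), ← Finset.sum_filter, Finset.filter_mem_eq_inter,
      Finset.univ_inter, Finset.sum_sub_distrib]
    have h2 : ∑ x ∈ C.image g, (if x = c then (1:ℤ) else 0) = ∑ v ∈ C, (if g v = c then (1:ℤ) else 0) :=
      Finset.sum_image (fun x hx y hy hxy => hinj hx hy hxy)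
    rw [← h2, himg]
    simp

end Aux6
namespace Aux6
open scoped Classical
open Polynomial

variable (D : Multidigraph)

lemma prod_coef (r : D.V) (f : D.V → Option (EE D)) :
    ∏ v, coefOf D (f v) = (X : R) ^ (rev D f) := by
  have key : ∀ v, coefOf D (f v) = if (f v).elim false Prod.snd = true then (X:R) else 1 := by
    intro v
    cases hfv : f v with
    | none => simp [coefOf]
    | some e =>
        obtain ⟨e, b⟩ := e
        cases b <;> simp [coefOf, wt]
  rw [Finset.prod_congr rfl (fun v _ => key v), Finset.prod_ite, Finset.prod_const,
    Finset.prod_const, one_pow, mul_one, rev]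

lemma det_formula (r : D.V) :
    ((Lap D).updateRow r (Pi.single r 1)).det
      = ∑ f ∈ Fintype.piFinset (rowIdx D r), (if Acy D r f then (X:R)^(rev D f) else 0) := by
  rw [rows_decomp]
  have hdet : (Matrix.of (fun v => ∑ j ∈ rowIdx D r v, gvec D r j)).det
      = (Matrix.detRowAlternating : (D.V → R) [⋀^D.V]→ₗ[R] R).toMultilinearMap
          (fun v => ∑ j ∈ rowIdx D r v, gvec D r j) := rfl
  rw [hdet, MultilinearMap.map_sum_finset]
  apply Finset.sum_congr rfl
  intro f hf
  have hgood := (mem_piFinset_iff D r f).1 hf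
  have h1 : (fun v => gvec D r (f v)) = fun v => coefOf D (f v) • uvec D r (f v) := rfl
  rw [h1, MultilinearMap.map_smul_univ]
  have h2 : (fun v => uvec D r (f v)) = fun v w => ((Nmat D r f).map (Int.cast : ℤ → R)) v w :=
    uvec_eq D r f hgood
  rw [h2]
  have h3 : (Matrix.detRowAlternating : (D.V → R) [⋀^D.V]→ₗ[R] R).toMultilinearMap
      (fun v w => ((Nmat D r f).map (Int.cast : ℤ → R)) v w)
      = ((Nmat D r f).map (Int.cast : ℤ → R)).det := rfl
  rw [h3]
  have h4 : ((Nmat D r f).map (Int.cast : ℤ → R)).det = (((Nmat D r f).det : ℤ) : R) := by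
    have h := (RingHom.map_det (Int.castRingHom R) (Nmat D r f)).symm
    rw [RingHom.mapMatrix_apply] at h
    simpa using h
  rw [h4, prod_coef D r f]
  by_cases hacy : Acy D r f
  · rw [if_pos hacy, det_Nmat_acy D r f hacy]
    simp
  · rw [if_neg hacy, det_Nmat_not_acy D r f hacy]
    simp

lemma P_eq (hD : D.Eulerian) (r r' : D.V) :
    (∑ f ∈ Fintype.piFinset (rowIdx D r), (if Acy D r f then (X:R)^(rev D f) else 0))
      = ∑ f ∈ Fintype.piFinset (rowIdx D r'), (if Acy D r' f then (X:R)^(rev D f) else 0) := by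
  rw [← det_formula, ← det_formula]
  have e1 : ((Lap D).updateRow r (Pi.single r 1)).det = (Lap D).adjugate r r :=
    (Matrix.adjugate_apply _ _ _).symm
  have e2 : ((Lap D).updateRow r' (Pi.single r' 1)).det = (Lap D).adjugate r' r' :=
    (Matrix.adjugate_apply _ _ _).symm
  rw [e1, e2]
  exact adj_diag_eq (Lap D) (row_sum_zero D) (col_sum_zero D hD.2) r r'

lemma card_filter_eq (hD : D.Eulerian) (k : ℕ) (r r' : D.V) :
    ((Fintype.piFinset (rowIdx D r)).filter (fun f => Acy D r f ∧ rev D f = k)).card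
      = ((Fintype.piFinset (rowIdx D r')).filter (fun f => Acy D r' f ∧ rev D f = k)).card := by
  have hP := P_eq D hD r r'
  have coeff_eq : ∀ (s : D.V) ,
      (∑ f ∈ Fintype.piFinset (rowIdx D s), (if Acy D s f then (X:R)^(rev D f) else 0)).coeff k
      = (((Fintype.piFinset (rowIdx D s)).filter (fun f => Acy D s f ∧ rev D f = k)).card : ℤ) := by
    intro s
    rw [Polynomial.finset_sum_coeff]
    have : ∀ f ∈ Fintype.piFinset (rowIdx D s),
        (if Acy D s f then (X:R)^(rev D f) else 0).coeff k
        = if Acy D s f ∧ rev D f = k then (1:ℤ) else 0 := by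
      intro f _
      by_cases hacy : Acy D s f
      · rw [if_pos hacy, Polynomial.coeff_X_pow]
        by_cases hk : rev D f = k
        · rw [if_pos hk.symm, if_pos ⟨hacy, hk⟩]
        · rw [if_neg (fun h => hk h.symm), if_neg (fun h => hk h.2)]
      · rw [if_neg hacy, Polynomial.coeff_zero, if_neg (fun h => hacy h.1)]
    rw [Finset.sum_congr rfl this, Finset.sum_boole]
  have h := (coeff_eq r).symm.trans (hP ▸ coeff_eq r')
  exact_mod_cast h

end Aux6
namespace Aux6
open scoped Classical

variable {D : Multidigraph}

def Tset (f : D.V → Option (EE D)) : Set D.E := {e | ∃ v b, f v = some (e, b)}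
def Sset (f : D.V → Option (EE D)) : Set D.E := {e | ∃ v, f v = some (e, true)}

section basic

variable {r : D.V} {f : D.V → Option (EE D)}

lemma f_ne_r (hg : Good D r f) {v : D.V} {e : EE D} (h : f v = some e) : v ≠ r := by
  intro hv
  rw [hv, hg.1] at h
  cases h

lemma tl_of_f (hg : Good D r f) {v : D.V} {e : EE D} (h : f v = some e) : tl D e = v := by
  obtain ⟨e', he', hte'⟩ := hg.2 v (f_ne_r hg h)
  rw [h] at he'
  rw [Option.some_injective _ he']
  exact hte'

lemma stp_of_f {v : D.V} {e : EE D} (h : f v = some e) : stp D f v = hd D e := by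
  rw [stp, h]; rfl

lemma no_two_cycle (hacy : Acy D r f) {v : D.V} (hv : v ≠ r) (hv2 : stp D f v ≠ r)
    (h : stp D f (stp D f v) = v) : False := by
  have horb : ∀ n, (stp D f)^[n] v = v ∨ (stp D f)^[n] v = stp D f v := by
    intro n
    induction n with
    | zero => left; rfl
    | succ n ih =>
        rw [Function.iterate_succ_apply']
        rcases ih with h1 | h1
        · right; rw [h1]
        · left; rw [h1, h]
  obtain ⟨n, hn⟩ := hacy v
  rcases horb n with h1 | h1
  · exact hv (h1 ▸ hn)
  · exact hv2 (h1 ▸ hn)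

/-- Two vertices using the same underlying edge must agree. -/
lemma inj1 (hg : Good D r f) (hacy : Acy D r f) {v v' : D.V} {e : D.E} {b b' : Bool}
    (h : f v = some (e, b)) (h' : f v' = some (e, b')) : v = v' ∧ b = b' := by
  have ht1 : tl D (e, b) = v := tl_of_f hg h
  have ht2 : tl D (e, b') = v' := tl_of_f hg h'
  have hvr : v ≠ r := f_ne_r hg h
  have hvr' : v' ≠ r := f_ne_r hg h'
  have key : ∀ (w w' : D.V) (c : Bool), f w = some (e, c) → f w' = some (e, !c) → False := by
    intro w w' c hw hw'
    have htw : tl D (e, c) = w := tl_of_f hg hw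
    have htw' : tl D (e, !c) = w' := tl_of_f hg hw'
    have hsw : stp D f w = hd D (e, c) := stp_of_f hw
    have hsw' : stp D f w' = hd D (e, !c) := stp_of_f hw'
    have hwr : w ≠ r := f_ne_r hg hw
    have hwr' : w' ≠ r := f_ne_r hg hw'
    have hdw : hd D (e, c) = w' := by
      rw [← htw']
      cases c <;> rfl
    have hdw' : hd D (e, !c) = w := by
      rw [← htw]
      cases c <;> rfl
    by_cases hww : w = w'
    · exact stp_ne_self hacy hwr (by rw [hsw, hdw, ← hww])
    · apply no_two_cycle hacy hwr (hv2 := ?_) (h := ?_)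
      · rw [hsw, hdw]; exact hwr'
      · rw [hsw, hdw, hsw', hdw']
  have hbb : b = b' := by
    by_contra hbb
    have : b' = !b := by cases b <;> cases b' <;> simp_all
    exact key v v' b h (this ▸ h')
  subst hbb
  refine ⟨?_, rfl⟩
  rw [← ht1, ← ht2]

lemma adj_of_f (hg : Good D r f) {v : D.V} {e : EE D} (h : f v = some e) :
    D.Adj (Tset f) v (stp D f v) := by
  refine ⟨e.1, ⟨v, e.2, by rw [h]⟩, ?_⟩
  have hst : stp D f v = hd D e := stp_of_f h
  have htl : tl D e = v := tl_of_f hg h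
  obtain ⟨e1, b⟩ := e
  cases b with
  | false =>
      left
      exact ⟨htl, by rw [hst]; rfl⟩
  | true =>
      right
      exact ⟨by rw [hst]; rfl, htl⟩

lemma mem_Tdiff (hg : Good D r f) (hacy : Acy D r f) {e : D.E} :
    e ∈ Tset f \ Sset f ↔ ∃ v, f v = some (e, false) := by
  constructor
  · rintro ⟨⟨v, b, hv⟩, hnS⟩
    cases b with
    | false => exact ⟨v, hv⟩
    | true => exact absurd ⟨v, hv⟩ hnS
  · rintro ⟨v, hv⟩
    refine ⟨⟨v, false, hv⟩, ?_⟩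
    rintro ⟨v', hv'⟩
    exact absurd (inj1 hg hacy hv hv').2 (by simp)

lemma card_ne_r (r : D.V) : Nat.card {v : D.V // v ≠ r} = Nat.card D.V - 1 := by
  rw [Nat.card_eq_fintype_card, Nat.card_eq_fintype_card, Fintype.card_subtype_compl,
    Fintype.card_subtype_eq]

lemma card_Tset (hg : Good D r f) (hacy : Acy D r f) :
    Nat.card (Tset f) = Nat.card D.V - 1 := by
  rw [← card_ne_r r]
  symm
  apply Nat.card_eq_of_bijective
    (f := fun v => (⟨((hg.2 v.1 v.2).choose).1,
      ⟨v.1, ((hg.2 v.1 v.2).choose).2, (hg.2 v.1 v.2).choose_spec.1⟩⟩ : Tset f))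
  constructor
  · rintro ⟨v, hv⟩ ⟨v', hv'⟩ heq
    have h1 := (hg.2 v hv).choose_spec.1
    have h2 := (hg.2 v' hv').choose_spec.1
    have : ((hg.2 v hv).choose).1 = ((hg.2 v' hv').choose).1 := congrArg Subtype.val heq
    apply Subtype.ext
    exact (inj1 hg hacy (e := ((hg.2 v hv).choose).1)
      (b := ((hg.2 v hv).choose).2) (b' := ((hg.2 v' hv').choose).2)
      h1 (by rw [this]; exact h2)).1
  · rintro ⟨e, v, b, hv⟩
    refine ⟨⟨v, f_ne_r hg hv⟩, ?_⟩
    apply Subtype.ext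
    have h1 := (hg.2 v (f_ne_r hg hv)).choose_spec.1
    exact congrArg Prod.fst (Option.some_injective _ (h1.symm.trans hv))

lemma card_Sset (hg : Good D r f) (hacy : Acy D r f) :
    Nat.card (Sset f) = rev D f := by
  rw [rev, ← Fintype.card_subtype, ← Nat.card_eq_fintype_card]
  symm
  have hsome : ∀ v : {v : D.V // (f v).elim false Prod.snd = true},
      ∃ e : D.E, f v.1 = some (e, true) := by
    rintro ⟨v, hv⟩
    cases hfv : f v with
    | none => rw [hfv] at hv; simp at hv
    | some e =>
        rw [hfv] at hv
        obtain ⟨e1, b⟩ := e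
        simp only [Option.elim_some] at hv
        exact ⟨e1, by rw [hv]⟩
  apply Nat.card_eq_of_bijective (f := fun v => (⟨(hsome v).choose, v.1, (hsome v).choose_spec⟩ : Sset f))
  constructor
  · rintro ⟨v, hv⟩ ⟨v', hv'⟩ heq
    have h1 := (hsome ⟨v, hv⟩).choose_spec
    have h2 := (hsome ⟨v', hv'⟩).choose_spec
    have heq' : (hsome ⟨v, hv⟩).choose = (hsome ⟨v', hv'⟩).choose := congrArg Subtype.val heq
    apply Subtype.ext
    exact (inj1 hg hacy h1 (by rw [h2, heq'])).1
  · rintro ⟨e, v, hv⟩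
    have hmem : (f v).elim false Prod.snd = true := by rw [hv]; rfl
    refine ⟨⟨v, hmem⟩, ?_⟩
    apply Subtype.ext
    have h1 := (hsome ⟨v, hmem⟩).choose_spec
    exact congrArg Prod.fst (Option.some_injective _ (h1.symm.trans hv))

lemma reach_root (hg : Good D r f) (hacy : Acy D r f) (v : D.V) :
    D.Reach (Tset f) v r := by
  obtain ⟨n, hn⟩ := hacy v
  induction n generalizing v with
  | zero =>
      have hvr : v = r := hn
      rw [hvr]
      exact Relation.ReflTransGen.refl
  | succ n ih =>
      by_cases hv : v = r
      · rw [hv]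
        exact Relation.ReflTransGen.refl
      · obtain ⟨e, he, _⟩ := hg.2 v hv
        rw [Function.iterate_succ_apply] at hn
        exact Relation.ReflTransGen.head (adj_of_f hg he) (ih _ hn)

lemma adj_symm {T : Set D.E} {a b : D.V} (h : D.Adj T a b) : D.Adj T b a := by
  obtain ⟨e, he, h1 | h1⟩ := h
  · exact ⟨e, he, Or.inr h1⟩
  · exact ⟨e, he, Or.inl h1⟩

lemma spanning (hg : Good D r f) (hacy : Acy D r f) : D.IsSpanningTree (Tset f) := by
  constructor
  · intro a b
    have hsym : Symmetric (D.Adj (Tset f)) := fun _ _ h => adj_symm h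
    exact (reach_root hg hacy a).trans ((@Relation.ReflTransGen.stdSymm _ _ ⟨fun _ _ h => hsym h⟩).symm _ _ (reach_root hg hacy b))
  · exact card_Tset hg hacy

lemma outdegRev_eq_one (hg : Good D r f) (hacy : Acy D r f) {v : D.V} (hv : v ≠ r) :
    D.outdegRev (Tset f) (Sset f) v = 1 := by
  obtain ⟨ev, hev, htev⟩ := hg.2 v hv
  have key : ∀ e : D.E,
      ((e ∈ Tset f \ Sset f ∧ D.first e = v) ∨ (e ∈ Sset f ∧ D.last e = v)) ↔ e = ev.1 := by
    intro e
    constructor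
    · rintro (⟨hTS, hfirst⟩ | ⟨hS, hlast⟩)
      · obtain ⟨u, hu⟩ := (mem_Tdiff hg hacy).1 hTS
        have : tl D (e, false) = u := tl_of_f hg hu
        have huv : u = v := by rw [← this, ← hfirst]; rfl
        rw [huv, hev] at hu
        exact (congrArg Prod.fst (Option.some_injective _ hu)).symm
      · obtain ⟨u, hu⟩ := hS
        have : tl D (e, true) = u := tl_of_f hg hu
        have huv : u = v := by rw [← this, ← hlast]; rfl
        rw [huv, hev] at hu
        exact (congrArg Prod.fst (Option.some_injective _ hu)).symm
    · intro he
      subst he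
      cases hb : ev.2 with
      | true =>
          right
          have hev' : f v = some (ev.1, true) := by rw [hev, ← hb]
          refine ⟨⟨v, hev'⟩, ?_⟩
          have : tl D (ev.1, true) = v := tl_of_f hg hev'
          rw [← this]; rfl
      | false =>
          left
          have hev' : f v = some (ev.1, false) := by rw [hev, ← hb]
          refine ⟨(mem_Tdiff hg hacy).2 ⟨v, hev'⟩, ?_⟩
          have : tl D (ev.1, false) = v := tl_of_f hg hev'
          rw [← this]; rfl
  rw [Multidigraph.outdegRev]
  rw [Nat.card_eq_one_iff_unique]
  constructor
  · constructor
    rintro ⟨x, hx⟩ ⟨y, hy⟩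
    apply Subtype.ext
    show x = y
    rw [(key x).1 hx, (key y).1 hy]
  · exact ⟨⟨ev.1, (key ev.1).2 rfl⟩⟩

lemma outdegRev_eq_zero (hg : Good D r f) :
    D.outdegRev (Tset f) (Sset f) r = 0 := by
  rw [Multidigraph.outdegRev, Nat.card_eq_zero]
  left
  constructor
  rintro ⟨e, (⟨⟨⟨u, b, hu⟩, hnS⟩, hfirst⟩ | ⟨⟨u, hu⟩, hlast⟩)⟩
  · cases b with
    | false =>
        have : tl D (e, false) = u := tl_of_f hg hu
        have hur : u = r := by rw [← this, ← hfirst]; rfl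
        exact f_ne_r hg hu hur
    | true =>
        exact hnS ⟨u, hu⟩
  · have : tl D (e, true) = u := tl_of_f hg hu
    have hur : u = r := by rw [← this, ← hlast]; rfl
    exact f_ne_r hg hu hur

lemma isK_of_f (hg : Good D r f) (hacy : Acy D r f) :
    D.IsKSpanningTree (Tset f) r (rev D f) := by
  refine ⟨Sset f, card_Sset hg hacy, spanning hg hacy, ?_, fun v hv => outdegRev_eq_one hg hacy hv,
    outdegRev_eq_zero hg⟩
  rintro e ⟨v, hv⟩
  exact ⟨v, true, hv⟩

end basic
end Aux6
namespace Aux6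
open scoped Classical

variable {D : Multidigraph}

lemma f_injective {r : D.V} {f f' : D.V → Option (EE D)}
    (hg : Good D r f) (hg' : Good D r f') (hacy : Acy D r f) (hacy' : Acy D r f')
    (hT : Tset f = Tset f') : f = f' := by
  by_contra hne
  have hBne : (Finset.univ.filter (fun v => f v ≠ f' v)).Nonempty := by
    rw [Finset.filter_nonempty_iff]
    obtain ⟨v, hv⟩ := Function.ne_iff.1 hne
    exact ⟨v, Finset.mem_univ v, hv⟩
  obtain ⟨v, hvmem, hvmax⟩ := Finset.exists_max_image _ (ht hacy) hBne
  rw [Finset.mem_filter] at hvmem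
  have hvne := hvmem.2
  have hvr : v ≠ r := by
    intro h
    rw [h, hg.1, hg'.1] at hvne
    exact hvne rfl
  obtain ⟨e, he, hte⟩ := hg.2 v hvr
  obtain ⟨e', he', hte'⟩ := hg'.2 v hvr
  obtain ⟨e1, b⟩ := e
  obtain ⟨e1', b'⟩ := e'
  have hee : e1 ≠ e1' := by
    intro h1
    subst h1
    apply hvne
    rw [he, he']
    have hbb : b = b' := by
      by_contra hbb
      have hfl : D.first e1 = v ∧ D.last e1 = v := by
        cases b <;> cases b' <;> simp_all [tl]
      have : stp D f v = v := by
        rw [stp_of_f he]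
        cases b
        · exact hfl.2
        · exact hfl.1
      exact stp_ne_self hacy hvr this
    rw [hbb]
  have heT : e1' ∈ Tset f := by
    rw [hT]
    exact ⟨v, b', he'⟩
  obtain ⟨u, b'', hu⟩ := heT
  have h1 : tl D (e1', b'') = u := tl_of_f hg hu
  have h2 : stp D f u = hd D (e1', b'') := stp_of_f hu
  have huv : u ≠ v := by
    intro h
    subst h
    exact hee (congrArg Prod.fst (Option.some_injective _ (he.symm.trans hu)))
  have hvstp : v = stp D f u := by
    rw [h2]
    cases hb' : b' <;> subst hb' <;> cases hb'' : b'' <;> subst hb''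
    · exact absurd (h1.symm.trans hte') huv
    · exact hte'.symm
    · exact hte'.symm
    · exact absurd (h1.symm.trans hte') huv
  have hur : u ≠ r := f_ne_r hg hu
  have hltv : ht hacy v < ht hacy u := by
    rw [hvstp]
    exact ht_step hacy hur
  have huB : u ∈ Finset.univ.filter (fun w => f w ≠ f' w) := by
    rw [Finset.mem_filter]
    refine ⟨Finset.mem_univ _, ?_⟩
    intro hfu
    rw [hfu] at hu
    exact huv (inj1 hg' hacy' hu he').1
  have := hvmax u huB
  omega

end Aux6
namespace Aux6
open scoped Classical

variable {D : Multidigraph}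

lemma exists_f {r : D.V} {T : Set D.E} {k : ℕ} (hT : D.IsKSpanningTree T r k) :
    ∃ f : D.V → Option (EE D), Good D r f ∧ Acy D r f ∧ rev D f = k ∧ Tset f = T := by
  obtain ⟨S, hcardS, ⟨hreach, hcardT⟩, hST, hout1, hout0⟩ := hT
  have hex : ∀ v : D.V, v ≠ r → ∃ e : D.E,
      (e ∈ T \ S ∧ D.first e = v) ∨ (e ∈ S ∧ D.last e = v) := by
    intro v hv
    have h1 := hout1 v hv
    rw [Multidigraph.outdegRev, Nat.card_eq_one_iff_unique] at h1
    obtain ⟨x⟩ := h1.2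
    exact ⟨x.1, x.2⟩
  obtain ⟨f, hfr, hfv⟩ : ∃ f : D.V → Option (EE D), f r = none ∧ ∀ v, v ≠ r →
      ∃ e : D.E, ((e ∈ T \ S ∧ D.first e = v) ∨ (e ∈ S ∧ D.last e = v)) ∧
        f v = some (e, if e ∈ S then true else false) := by
    refine ⟨fun v => if hv : v = r then none else
      some ((hex v hv).choose, if (hex v hv).choose ∈ S then true else false), by simp, ?_⟩
    intro v hv
    refine ⟨(hex v hv).choose, (hex v hv).choose_spec, ?_⟩
    exact dif_neg hv
  have hner : ∀ {v : D.V} {o}, f v = some o → v ≠ r := by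
    intro v o h hv
    rw [hv, hfr] at h
    cases h
  have hprop : ∀ {v : D.V} {e : D.E} {b : Bool}, f v = some (e, b) →
      (((e ∈ T \ S ∧ D.first e = v) ∨ (e ∈ S ∧ D.last e = v)) ∧ (b = true ↔ e ∈ S)) := by
    intro v e b h
    obtain ⟨e', hp, heq⟩ := hfv v (hner h)
    have h2 := Option.some_injective _ (heq.symm.trans h)
    have he : e' = e := congrArg Prod.fst h2
    have hb : (if e ∈ S then true else false) = b := by
      rw [← he]; exact congrArg Prod.snd h2
    rw [he] at hp
    refine ⟨hp, ?_⟩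
    by_cases hs : e ∈ S
    · rw [if_pos hs] at hb
      simp [← hb, hs]
    · rw [if_neg hs] at hb
      simp [← hb, hs]
  have hgood : Good D r f := by
    refine ⟨hfr, ?_⟩
    intro v hv
    obtain ⟨e, hp, heq⟩ := hfv v hv
    refine ⟨(e, if e ∈ S then true else false), heq, ?_⟩
    by_cases hs : e ∈ S
    · rw [if_pos hs]
      rcases hp with ⟨⟨_, hnS⟩, _⟩ | ⟨_, hlast⟩
      · exact absurd hs hnS
      · exact hlast
    · rw [if_neg hs]
      rcases hp with ⟨_, hfirst⟩ | ⟨hS, _⟩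
      · exact hfirst
      · exact absurd hS hs
  -- injectivity of the edge assignment
  have hinj0 : ∀ {v v' : D.V} {e : D.E} {b b' : Bool}, f v = some (e, b) → f v' = some (e, b') →
      v = v' ∧ b = b' := by
    intro v v' e b b' h h'
    have p := hprop h
    have p' := hprop h'
    have hbb : b = b' := by
      rcases hb : b <;> rcases hb' : b' <;> subst hb hb' <;> simp_all
    refine ⟨?_, hbb⟩
    rcases p.1 with ⟨⟨_, hnS⟩, hfirst⟩ | ⟨hS, hlast⟩ <;>
      rcases p'.1 with ⟨⟨_, hnS'⟩, hfirst'⟩ | ⟨hS', hlast'⟩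
    · rw [← hfirst, ← hfirst']
    · exact absurd hS' hnS
    · exact absurd hS hnS'
    · rw [← hlast, ← hlast']
  -- the edge map is surjective onto T
  have hmemT : ∀ {v : D.V} {e : D.E} {b : Bool}, f v = some (e, b) → e ∈ T := by
    intro v e b h
    rcases (hprop h).1 with ⟨⟨h1, _⟩, _⟩ | ⟨h1, _⟩
    · exact h1
    · exact hST h1
  have hsurjT : ∀ e ∈ T, ∃ v b, f v = some (e, b) := by
    have hpick : ∀ v : {v : D.V // v ≠ r}, ∃ e : D.E, ∃ b : Bool, f v.1 = some (e, b) := by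
      rintro ⟨v, hv⟩
      obtain ⟨e, _, heq⟩ := hfv v hv
      exact ⟨e, _, heq⟩
    have hpickT : ∀ v : {v : D.V // v ≠ r}, (hpick v).choose ∈ T := by
      intro v
      obtain ⟨b, hb⟩ := (hpick v).choose_spec
      exact hmemT hb
    set ψ : {v : D.V // v ≠ r} → {e : D.E // e ∈ T} := fun v =>
      ⟨(hpick v).choose, hpickT v⟩ with hψ
    have hψinj : Function.Injective ψ := by
      rintro ⟨v, hv⟩ ⟨v', hv'⟩ heq
      obtain ⟨b1, hb1⟩ := (hpick ⟨v, hv⟩).choose_spec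
      obtain ⟨b2, hb2⟩ := (hpick ⟨v', hv'⟩).choose_spec
      have he : (hpick ⟨v, hv⟩).choose = (hpick ⟨v', hv'⟩).choose :=
        congrArg Subtype.val heq
      rw [← he] at hb2
      apply Subtype.ext
      show v = v'
      exact (hinj0 hb1 hb2).1
    have hcards : Fintype.card {v : D.V // v ≠ r} = Fintype.card {e : D.E // e ∈ T} := by
      have c1 : Fintype.card {v : D.V // v ≠ r} = Fintype.card D.V - 1 := by
        rw [Fintype.card_subtype_compl, Fintype.card_subtype_eq]
      have c2 : Nat.card T = Nat.card D.V - 1 := hcardT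
      rw [Nat.card_eq_fintype_card, Nat.card_eq_fintype_card] at c2
      rw [c1, ← c2]
    have hψbij : Function.Bijective ψ := (Fintype.bijective_iff_injective_and_card ψ).2
      ⟨hψinj, hcards⟩
    intro e he
    obtain ⟨⟨v, hv⟩, hveq⟩ := hψbij.2 ⟨e, he⟩
    obtain ⟨b1, hb1⟩ := (hpick ⟨v, hv⟩).choose_spec
    have he1 : (hpick ⟨v, hv⟩).choose = e := congrArg Subtype.val hveq
    rw [he1] at hb1
    exact ⟨v, b1, hb1⟩
  -- acyclicity
  have hstpr : stp D f r = r := by rw [stp, hfr]; rfl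
  have hstpA : ∀ u : D.V, (∃ n, (stp D f)^[n] u = r) ↔ (∃ n, (stp D f)^[n] (stp D f u) = r) := by
    intro u
    constructor
    · rintro ⟨n, hn⟩
      cases n with
      | zero =>
          refine ⟨0, ?_⟩
          have hur : u = r := hn
          rw [hur, hstpr]
          rfl
      | succ n => exact ⟨n, by rw [← Function.iterate_succ_apply]; exact hn⟩
    · rintro ⟨n, hn⟩
      exact ⟨n + 1, by rw [Function.iterate_succ_apply]; exact hn⟩
  have hadjA : ∀ a b : D.V, D.Adj T a b →
      ((∃ n, (stp D f)^[n] a = r) ↔ (∃ n, (stp D f)^[n] b = r)) := by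
    rintro a b ⟨e, heT, hab⟩
    obtain ⟨u, bu, hu⟩ := hsurjT e heT
    have h1 : tl D (e, bu) = u := tl_of_f hgood hu
    have h2 : stp D f u = hd D (e, bu) := stp_of_f hu
    have hfl : (D.first e = u ∧ D.last e = stp D f u) ∨ (D.first e = stp D f u ∧ D.last e = u) := by
      cases hbu : bu <;> subst hbu
      · left; exact ⟨h1, by rw [h2]; rfl⟩
      · right; exact ⟨by rw [h2]; rfl, h1⟩
    rcases hab with ⟨ha, hb⟩ | ⟨hb, ha⟩ <;> rcases hfl with ⟨hu1, hu2⟩ | ⟨hu1, hu2⟩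
    · rw [← ha, ← hb, hu1, hu2]; exact hstpA u
    · rw [← ha, ← hb, hu1, hu2]; exact (hstpA u).symm
    · rw [← ha, ← hb, hu1, hu2]; exact (hstpA u).symm
    · rw [← ha, ← hb, hu1, hu2]; exact hstpA u
  have hacy : Acy D r f := by
    intro v
    have hr := hreach v r
    rw [Multidigraph.Reach] at hr
    induction hr using Relation.ReflTransGen.head_induction_on with
    | refl => exact ⟨0, rfl⟩
    | head hadj _ ih => exact (hadjA _ _ hadj).2 ih
  -- Tset f = T
  have hTeq : Tset f = T := by
    apply Set.Subset.antisymm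
    · rintro e ⟨v, b, hv⟩
      exact hmemT hv
    · intro e he
      obtain ⟨v, b, hv⟩ := hsurjT e he
      exact ⟨v, b, hv⟩
  -- Sset f = S
  have hSeq : Sset f = S := by
    apply Set.Subset.antisymm
    · rintro e ⟨v, hv⟩
      exact (hprop hv).2.1 rfl
    · intro e he
      obtain ⟨v, b, hv⟩ := hsurjT e (hST he)
      have hb : b = true := (hprop hv).2.2 he
      exact ⟨v, by rw [← hb]; exact hv⟩
  refine ⟨f, hgood, hacy, ?_, hTeq⟩
  rw [← card_Sset hgood hacy, hSeq, hcardS]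

end Aux6
namespace Aux6
open scoped Classical

lemma c_eq_filter (D : Multidigraph) (k : ℕ) (r : D.V) :
    D.c k r = ((Fintype.piFinset (rowIdx D r)).filter
      (fun f => Acy D r f ∧ rev D f = k)).card := by
  rw [Multidigraph.c, ← Nat.card_eq_finsetCard]
  symm
  have hmap : ∀ f : D.V → Option (EE D), f ∈ (Fintype.piFinset (rowIdx D r)).filter
      (fun f => Acy D r f ∧ rev D f = k) → D.IsKSpanningTree (Tset f) r k := by
    intro f hf
    rw [Finset.mem_filter] at hf
    obtain ⟨hmem, hacy, hrev⟩ := hf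
    have hgood := (mem_piFinset_iff D r f).1 hmem
    have h := isK_of_f hgood hacy
    rwa [hrev] at h
  apply Nat.card_eq_of_bijective
    (f := fun f : {f // f ∈ (Fintype.piFinset (rowIdx D r)).filter
        (fun f => Acy D r f ∧ rev D f = k)} =>
      (⟨Tset f.1, hmap f.1 f.2⟩ : {T : Set D.E // D.IsKSpanningTree T r k}))
  constructor
  · rintro ⟨f, hf⟩ ⟨f', hf'⟩ heq
    rw [Finset.mem_filter] at hf hf'
    apply Subtype.ext
    exact f_injective ((mem_piFinset_iff D r f).1 hf.1) ((mem_piFinset_iff D r f').1 hf'.1)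
      hf.2.1 hf'.2.1 (congrArg Subtype.val heq)
  · rintro ⟨T, hT⟩
    obtain ⟨f, hgood, hacy, hrev, hTeq⟩ := exists_f hT
    refine ⟨⟨f, ?_⟩, ?_⟩
    · rw [Finset.mem_filter]
      exact ⟨(mem_piFinset_iff D r f).2 hgood, hacy, hrev⟩
    · exact Subtype.ext hTeq

end Aux6


/-- For any Eulerian digraph `D` and any `k`, the number of
`k`-spanning trees of `D` rooted at `r` is independent of the root `r`. -/
theorem stmt6 (D : Multidigraph) (hD : D.Eulerian) (k : ℕ) (r r' : D.V) :
    D.c k r = D.c k r' := by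
  rw [Aux6.c_eq_filter, Aux6.c_eq_filter, Aux6.card_filter_eq D hD k r r']
end

section
/- Let D be an Eulerian digraph and fix an edge e with initial vertex r. The number of Eulerian tours of D beginning with e equals the number of oriented spanning trees of D rooted at r multiplied by the product over all vertices u of (outdeg(u) - 1)!. -/
open Classical

/-- Cyclic successor on `Fin m`. -/
def cyclicSucc {m : ℕ} (i : Fin m) : Fin m := ⟨(i.1 + 1) % m, Nat.mod_lt _ i.pos⟩

namespace Multidigraph

variable (D : Multidigraph)

/-- An Eulerian tour of `D`: a cyclic listing of all edges in which the final
vertex of each edge is the initial vertex of the next. -/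
def IsEulerianTour (σ : Fin (Fintype.card D.E) ≃ D.E) : Prop :=
  ∀ i, D.last (σ i) = D.first (σ (cyclicSucc i))

/-- The tour `σ` begins with the edge `e`. -/
def BeginsWith (σ : Fin (Fintype.card D.E) ≃ D.E) (e : D.E) : Prop :=
  ∃ h : 0 < Fintype.card D.E, σ ⟨0, h⟩ = e

end Multidigraph


-- generic: number of equivs α ≃ Fin m sending a to b is (m-1)!
theorem card_equiv_fix {α : Type} [Fintype α] {m : ℕ} (hm : Fintype.card α = m)
    (a : α) (b : Fin m) :
    Nat.card {g : α ≃ Fin m // g a = b} = Nat.factorial (m - 1) := by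
  classical
  have key : Nat.card {g : α ≃ Fin m // g a = b}
      = Nat.card ({x : α // x ≠ a} ≃ {i : Fin m // i ≠ b}) := by
    apply Nat.card_eq_of_bijective
      (fun gp => gp.1.subtypeEquiv (fun x => not_congr
        ⟨fun hx => hx ▸ gp.2, fun hx => gp.1.injective (hx.trans gp.2.symm)⟩))
    constructor
    · rintro ⟨g, hg⟩ ⟨g', hg'⟩ hgg
      ext x
      by_cases hx : x = a
      · subst hx; rw [hg, hg']
      · have := congrFun (congrArg (fun (q : _ ≃ _) => (q : {x : α // x ≠ a} → _)) hgg) ⟨x, hx⟩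
        simp [Equiv.subtypeEquiv, Subtype.ext_iff] at this
        exact congrArg Fin.val this
    · intro h
      have hf : Function.Bijective (fun x : α => if hx : x = a then b else (h ⟨x, hx⟩ : Fin m)) := by
        constructor
        · intro x y hxy
          by_cases hx : x = a <;> by_cases hy : y = a <;> simp [hx, hy] at hxy ⊢
          · exact absurd hxy.symm (h ⟨y, hy⟩).2
          · exact absurd hxy (h ⟨x, hx⟩).2
          · exact Subtype.ext_iff.mp (h.injective (Subtype.ext hxy))
        · intro i
          by_cases hi : i = b
          · exact ⟨a, by simp [hi]⟩
          · refine ⟨(h.symm ⟨i, hi⟩).1, ?_⟩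
            have hne : ((h.symm ⟨i, hi⟩) : α) ≠ a := (h.symm ⟨i, hi⟩).2
            simp [hne]
      refine ⟨⟨Equiv.ofBijective _ hf, by simp [Equiv.ofBijective]⟩, ?_⟩
      ext x
      have hx : (x : α) ≠ a := x.2
      simp [Equiv.ofBijective, Equiv.subtypeEquiv, hx]
  rw [key]
  have h1 : Fintype.card {x : α // x ≠ a} = m - 1 := by
    rw [Fintype.card_subtype_compl, Fintype.card_subtype_eq, hm]
  have h2 : Fintype.card {i : Fin m // i ≠ b} = m - 1 := by
    rw [Fintype.card_subtype_compl, Fintype.card_subtype_eq, Fintype.card_fin]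
  have e0 : {x : α // x ≠ a} ≃ {i : Fin m // i ≠ b} := Fintype.equivOfCardEq (h1.trans h2.symm)
  rw [Nat.card_eq_fintype_card, Fintype.card_equiv e0, h1]

-- uniqueness of order-compatible equiv to Fin m
theorem equiv_fin_order_unique {α : Type} {m : ℕ} (g h : α ≃ Fin m)
    (hgh : ∀ x y, g x < g y ↔ h x < h y) : g = h := by
  let k : Fin m ≃ Fin m := g.symm.trans h
  have hk : StrictMono k := by
    intro a b hab
    have : g (g.symm a) < g (g.symm b) := by simpa using hab
    simpa [k] using (hgh _ _).mp this
  have : hk.orderIsoOfSurjective k k.surjective = OrderIso.refl (Fin m) := Subsingleton.elim _ _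
  have hkid : ∀ i, k i = i := by
    intro i
    have := congrArg (fun (q : Fin m ≃o Fin m) => q i) this
    simpa only [StrictMono.coe_orderIsoOfSurjective, OrderIso.refl_apply] using this
  ext x
  have h2 := hkid (g x)
  simp [k] at h2
  exact congrArg Fin.val h2.symm

namespace BestProof
open Multidigraph Finset

variable (D : Multidigraph)

/-- Out-edges at `v`, as a Finset. -/
noncomputable def Fout (v : D.V) : Finset D.E := Finset.univ.filter (fun x => D.first x = v)

/-- In-edges at `v`, as a Finset. -/
noncomputable def Fin' (v : D.V) : Finset D.E := Finset.univ.filter (fun x => D.last x = v)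

theorem card_Fout (v : D.V) : (Fout D v).card = D.outdeg v := by
  rw [Multidigraph.outdeg, Nat.card_eq_fintype_card, Fintype.card_subtype]
  rfl

theorem card_Fin' (v : D.V) : (Fin' D v).card = D.indeg v := by
  rw [Multidigraph.indeg, Nat.card_eq_fintype_card, Fintype.card_subtype]
  rfl

theorem mem_Fout {v : D.V} {x : D.E} : x ∈ Fout D v ↔ D.first x = v := by
  simp [Fout]

theorem mem_Fin' {v : D.V} {x : D.E} : x ∈ Fin' D v ↔ D.last x = v := by
  simp [Fin']

/-- The family of rank functions at each vertex. -/
def RkFam : Type := ∀ v : D.V, {x : D.E // D.first x = v} ≃ Fin (D.outdeg v)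

/-- Rank of an edge. -/
noncomputable def rk (g : RkFam D) (x : D.E) : ℕ := (g (D.first x) ⟨x, rfl⟩ : ℕ)

theorem rk_lt (g : RkFam D) (x : D.E) : rk D g x < D.outdeg (D.first x) :=
  (g (D.first x) ⟨x, rfl⟩).2

theorem rk_eq (g : RkFam D) {x : D.E} {v : D.V} (hx : D.first x = v) :
    rk D g x = ((g v ⟨x, hx⟩ : Fin (D.outdeg v)) : ℕ) := by subst hx; rfl

theorem rk_inj {g : RkFam D} {x y : D.E} (hxy : D.first x = D.first y)
    (hr : rk D g x = rk D g y) : x = y := by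
  rw [rk_eq D g hxy, rk_eq D g (rfl : D.first y = D.first y)] at hr
  have : (⟨x, hxy⟩ : {z : D.E // D.first z = D.first y}) = ⟨y, rfl⟩ :=
    (g (D.first y)).injective (Fin.ext hr)
  exact congrArg Subtype.val this

/-- Constraint on a rank function at `v`: the fixed starting edge `e` gets rank `0`
(relevant only at `v = first e`) and any tree edge gets the maximal rank. -/
def OK (e : D.E) (T : Set D.E) (v : D.V)
    (g : {x : D.E // D.first x = v} ≃ Fin (D.outdeg v)) : Prop :=
  (∀ hx : D.first e = v, ((g ⟨e, hx⟩ : Fin (D.outdeg v)) : ℕ) = 0) ∧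
  ∀ x (hx : D.first x = v), x ∈ T → ((g ⟨x, hx⟩ : Fin (D.outdeg v)) : ℕ) = D.outdeg v - 1

/-- Candidates for the next edge: unused out-edges at the current vertex. -/
noncomputable def cands (p : Finset D.E × D.E) : Finset D.E :=
  Finset.univ.filter (fun y => D.first y = D.last p.2 ∧ y ∉ p.1)

theorem mem_cands {p : Finset D.E × D.E} {y : D.E} :
    y ∈ cands D p ↔ D.first y = D.last p.2 ∧ y ∉ p.1 := by simp [cands]

/-- One step of the greedy walk. -/
noncomputable def step (rank : D.E → ℕ) (p : Finset D.E × D.E) : Finset D.E × D.E :=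
  if h : (cands D p).Nonempty then
    (insert (Finset.exists_min_image (cands D p) rank h).choose p.1,
      (Finset.exists_min_image (cands D p) rank h).choose)
  else p

/-- The greedy walk: state `(used edges, current edge)`. -/
noncomputable def walk (e : D.E) (rank : D.E → ℕ) : ℕ → Finset D.E × D.E
  | 0 => ({e}, e)
  | k + 1 => step D rank (walk e rank k)

theorem step_spec (rank : D.E → ℕ) (p : Finset D.E × D.E) (h : (cands D p).Nonempty) :
    (step D rank p).2 ∈ cands D p ∧ (∀ y ∈ cands D p, rank (step D rank p).2 ≤ rank y) ∧
      (step D rank p).1 = insert (step D rank p).2 p.1 := by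
  have hc := (Finset.exists_min_image (cands D p) rank h).choose_spec
  simp only [step, dif_pos h]
  exact ⟨hc.1, hc.2, trivial⟩

theorem step_stuck (rank : D.E → ℕ) (p : Finset D.E × D.E) (h : ¬ (cands D p).Nonempty) :
    step D rank p = p := by rw [step, dif_neg h]

/-- The walk survived `k` steps: at every step before `k` there was a candidate. -/
def Alive (e : D.E) (rank : D.E → ℕ) (k : ℕ) : Prop :=
  ∀ j < k, (cands D (walk D e rank j)).Nonempty

section WalkLemmas

variable {D} {e : D.E} {rank : D.E → ℕ}

theorem alive_mono {k l : ℕ} (h : Alive D e rank k) (hlk : l ≤ k) : Alive D e rank l :=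
  fun j hj => h j (lt_of_lt_of_le hj hlk)

theorem cur_mem_used (k : ℕ) : (walk D e rank k).2 ∈ (walk D e rank k).1 := by
  induction k with
  | zero => simp [walk]
  | succ k ih =>
    by_cases h : (cands D (walk D e rank k)).Nonempty
    · have := step_spec D rank (walk D e rank k) h
      rw [walk, this.2.2]
      exact Finset.mem_insert_self _ _
    · rw [walk, step_stuck D rank _ h]; exact ih

theorem used_subset_succ (k : ℕ) : (walk D e rank k).1 ⊆ (walk D e rank (k + 1)).1 := by
  by_cases h : (cands D (walk D e rank k)).Nonempty
  · have := step_spec D rank (walk D e rank k) h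
    rw [walk, this.2.2]
    exact Finset.subset_insert _ _
  · rw [walk, step_stuck D rank _ h]

theorem used_mono {k l : ℕ} (hkl : k ≤ l) : (walk D e rank k).1 ⊆ (walk D e rank l).1 := by
  induction l with
  | zero => simp [Nat.le_zero.mp hkl]
  | succ l ih =>
    rcases Nat.lt_or_ge k (l + 1) with h | h
    · exact (ih (Nat.lt_succ_iff.mp h)).trans (used_subset_succ l)
    · have : k = l + 1 := le_antisymm hkl h
      simp [this]

theorem cur_succ_spec {k : ℕ} (h : (cands D (walk D e rank k)).Nonempty) :
    (walk D e rank (k+1)).2 ∈ cands D (walk D e rank k) ∧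
      (∀ y ∈ cands D (walk D e rank k), rank (walk D e rank (k+1)).2 ≤ rank y) ∧
      (walk D e rank (k+1)).1 = insert (walk D e rank (k+1)).2 (walk D e rank k).1 := by
  have := step_spec D rank (walk D e rank k) h
  rw [walk]
  exact this

theorem used_card {k : ℕ} (h : Alive D e rank k) : (walk D e rank k).1.card = k + 1 := by
  induction k with
  | zero => simp [walk]
  | succ k ih =>
    have hk : Alive D e rank k := alive_mono h (Nat.le_succ k)
    have hne := h k (Nat.lt_succ_self k)
    have hs := cur_succ_spec hne
    have hnot : (walk D e rank (k+1)).2 ∉ (walk D e rank k).1 := ((mem_cands D).mp hs.1).2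
    rw [hs.2.2, Finset.card_insert_of_notMem hnot, ih hk]

theorem cur_first {k : ℕ} (h : (cands D (walk D e rank k)).Nonempty) :
    D.first (walk D e rank (k+1)).2 = D.last (walk D e rank k).2 :=
  ((mem_cands D).mp (cur_succ_spec h).1).1

theorem used_eq_cur_image {k : ℕ} (h : Alive D e rank k) :
    ∀ x, x ∈ (walk D e rank k).1 ↔ ∃ j ≤ k, (walk D e rank j).2 = x := by
  induction k with
  | zero =>
    intro x
    constructor
    · intro hx
      refine ⟨0, le_refl 0, ?_⟩
      have hx' : x ∈ ({e} : Finset D.E) := hx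
      exact (Finset.mem_singleton.mp hx').symm
    · rintro ⟨j, hj, hjx⟩
      rw [Nat.le_zero.mp hj] at hjx
      rw [← hjx]
      exact cur_mem_used 0
  | succ k ih =>
    intro x
    have hk : Alive D e rank k := alive_mono h (Nat.le_succ k)
    have hne := h k (Nat.lt_succ_self k)
    have hs := cur_succ_spec hne
    rw [hs.2.2]
    simp only [Finset.mem_insert]
    constructor
    · rintro (hx | hx)
      · exact ⟨k + 1, le_refl _, hx.symm⟩
      · obtain ⟨j, hj, hjx⟩ := (ih hk x).mp hx
        exact ⟨j, hj.trans (Nat.le_succ k), hjx⟩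
    · rintro ⟨j, hj, hjx⟩
      rcases Nat.lt_or_ge j (k + 1) with hjk | hjk
      · exact Or.inr ((ih hk x).mpr ⟨j, Nat.lt_succ_iff.mp hjk, hjx⟩)
      · exact Or.inl (by rw [← hjx, le_antisymm hj hjk])

theorem cur_inj {i j k : ℕ} (h : Alive D e rank k) (hij : i < j) (hjk : j ≤ k) :
    (walk D e rank i).2 ≠ (walk D e rank j).2 := by
  obtain ⟨j', rfl⟩ : ∃ j', j = j' + 1 := ⟨j - 1, (Nat.succ_pred_eq_of_pos (Nat.pos_of_ne_zero (by omega))).symm⟩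
  have hne := h j' (by omega)
  have hs := cur_succ_spec hne
  have hnot : (walk D e rank (j'+1)).2 ∉ (walk D e rank j').1 := ((mem_cands D).mp hs.1).2
  have hmem : (walk D e rank i).2 ∈ (walk D e rank j').1 :=
    used_mono (by omega) (cur_mem_used i)
  intro hcontra
  exact hnot (hcontra ▸ hmem)

end WalkLemmas

end BestProof

namespace BestProof
open Multidigraph Finset

section Counting

variable {D : Multidigraph} {e : D.E} {rank : D.E → ℕ} {r : D.V}

theorem walk_count (he : D.first e = r) {k : ℕ} (h : Alive D e rank k) (v : D.V) :
    ((walk D e rank k).1.filter (fun x => D.last x = v)).card + (if v = r then 1 else 0)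
      = ((walk D e rank k).1.filter (fun x => D.first x = v)).card
        + (if v = D.last (walk D e rank k).2 then 1 else 0) := by
  induction k with
  | zero =>
    have h1 : ((walk D e rank 0).1 : Finset D.E) = {e} := rfl
    have h2 : (walk D e rank 0).2 = e := rfl
    rw [h1, h2, Finset.filter_singleton, Finset.filter_singleton]
    have h3 : (D.first e = v) = (v = r) := by rw [he]; exact propext eq_comm
    have h4 : (D.last e = v) = (v = D.last e) := propext eq_comm
    rw [h3, h4]
    split_ifs <;> simp
  | succ k ih =>
    have hk : Alive D e rank k := alive_mono h (Nat.le_succ k)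
    have hne := h k (Nat.lt_succ_self k)
    have hs := cur_succ_spec hne
    set y := (walk D e rank (k+1)).2 with hy
    have hnotin : y ∉ (walk D e rank k).1 := ((mem_cands D).mp hs.1).2
    have hfy : D.first y = D.last (walk D e rank k).2 := ((mem_cands D).mp hs.1).1
    have hins : (walk D e rank (k+1)).1 = insert y (walk D e rank k).1 := hs.2.2
    have cardf : ∀ (P : D.E → Prop),
        ((insert y (walk D e rank k).1).filter (fun x => P x)).card
          = ((walk D e rank k).1.filter (fun x => P x)).card + (if P y then 1 else 0) := by
      intro P
      rw [Finset.filter_insert]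
      by_cases hP : P y
      · rw [if_pos hP, Finset.card_insert_of_notMem (fun hmem => hnotin (Finset.mem_filter.mp hmem).1), if_pos hP]
      · rw [if_neg hP, if_neg hP]; omega
    rw [hins, cardf (fun x => D.last x = v), cardf (fun x => D.first x = v)]
    have ihv := ih hk
    rw [← hfy] at ihv
    have c1 : (v = D.last y) = (D.last y = v) := propext eq_comm
    have c2 : (v = D.first y) = (D.first y = v) := propext eq_comm
    rw [c1]
    rw [c2] at ihv
    split_ifs at ihv ⊢ <;> omega

theorem filter_used_le_out (p : Finset D.E × D.E) (v : D.V) :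
    (p.1.filter (fun x => D.first x = v)).card ≤ D.outdeg v := by
  rw [← card_Fout]
  exact Finset.card_le_card (by
    intro x hx
    rw [mem_Fout]
    exact (Finset.mem_filter.mp hx).2)

theorem filter_used_le_in (p : Finset D.E × D.E) (v : D.V) :
    (p.1.filter (fun x => D.last x = v)).card ≤ D.indeg v := by
  rw [← card_Fin']
  exact Finset.card_le_card (by
    intro x hx
    rw [mem_Fin']
    exact (Finset.mem_filter.mp hx).2)

theorem out_used_all {p : Finset D.E × D.E} {v : D.V}
    (h : (p.1.filter (fun x => D.first x = v)).card = D.outdeg v) :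
    Fout D v ⊆ p.1 := by
  have hsub : p.1.filter (fun x => D.first x = v) ⊆ Fout D v := by
    intro x hx; rw [mem_Fout]; exact (Finset.mem_filter.mp hx).2
  have := Finset.eq_of_subset_of_card_le hsub (by rw [card_Fout]; omega)
  intro x hx
  rw [← this] at hx
  exact (Finset.mem_filter.mp hx).1

theorem in_used_all {p : Finset D.E × D.E} {v : D.V}
    (h : (p.1.filter (fun x => D.last x = v)).card = D.indeg v) :
    Fin' D v ⊆ p.1 := by
  have hsub : p.1.filter (fun x => D.last x = v) ⊆ Fin' D v := by
    intro x hx; rw [mem_Fin']; exact (Finset.mem_filter.mp hx).2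
  have := Finset.eq_of_subset_of_card_le hsub (by rw [card_Fin']; omega)
  intro x hx
  rw [← this] at hx
  exact (Finset.mem_filter.mp hx).1

end Counting

section EulerFacts

variable {D : Multidigraph}

theorem exists_out (hD : D.Eulerian) {e : D.E} {r : D.V} (he : D.first e = r) (v : D.V) :
    ∃ x : D.E, D.first x = v := by
  have hpos : ∀ w : D.V, 0 < D.indeg w → ∃ x, D.first x = w := by
    intro w hw
    rw [hD.2 w] at hw
    rw [Multidigraph.outdeg] at hw
    obtain ⟨x⟩ := (Nat.card_pos_iff.mp hw).1
    exact ⟨x.1, x.2⟩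
  by_cases hv : v = r
  · exact ⟨e, hv ▸ he⟩
  · have hreach := hD.1 v r
    rcases hreach.cases_head with heq | ⟨c, hadj, _⟩
    · exact absurd heq hv
    · obtain ⟨x, _, hx⟩ := hadj
      rcases hx with ⟨h1, _⟩ | ⟨_, h2⟩
      · exact ⟨x, h1⟩
      · exact hpos v (by
          rw [Multidigraph.indeg]
          exact Nat.card_pos_iff.mpr ⟨⟨⟨x, h2⟩⟩, inferInstance⟩)

end EulerFacts

section TreeFacts

variable {D : Multidigraph} {T : Set D.E} {r : D.V}

theorem outdegRev_empty (T : Set D.E) (v : D.V) :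
    D.outdegRev T ∅ v = Nat.card {x : D.E // x ∈ T ∧ D.first x = v} := by
  unfold Multidigraph.outdegRev
  exact Nat.card_congr (Equiv.subtypeEquivRight (by simp))

theorem tree_no_edge_at_root (hT : D.IsOrientedSpanningTree T r) :
    ∀ x ∈ T, D.first x ≠ r := by
  intro x hx hfx
  have h0 := hT.2.2.2
  rw [outdegRev_empty] at h0
  rcases Nat.card_eq_zero.mp h0 with hemp | hinf
  · exact hemp.false ⟨x, hx, hfx⟩
  · exact absurd hinf (not_infinite_iff_finite.mpr inferInstance)

theorem tree_edge_unique (hT : D.IsOrientedSpanningTree T r) {v : D.V} (hv : v ≠ r) :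
    ∃! x : D.E, x ∈ T ∧ D.first x = v := by
  have h1 := hT.2.2.1 v hv
  rw [outdegRev_empty] at h1
  obtain ⟨hsub, ⟨x⟩⟩ := Nat.card_eq_one_iff_unique.mp h1
  refine ⟨x.1, x.2, fun y hy => ?_⟩
  exact congrArg Subtype.val (hsub.elim ⟨y, hy⟩ x)

/-- The unique tree edge leaving `v ≠ r`. -/
noncomputable def tEdge (hT : D.IsOrientedSpanningTree T r) {v : D.V} (hv : v ≠ r) : D.E :=
  (tree_edge_unique hT hv).exists.choose

theorem tEdge_mem (hT : D.IsOrientedSpanningTree T r) {v : D.V} (hv : v ≠ r) :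
    tEdge hT hv ∈ T := (tree_edge_unique hT hv).exists.choose_spec.1

theorem tEdge_first (hT : D.IsOrientedSpanningTree T r) {v : D.V} (hv : v ≠ r) :
    D.first (tEdge hT hv) = v := (tree_edge_unique hT hv).exists.choose_spec.2

theorem tEdge_eq (hT : D.IsOrientedSpanningTree T r) {v : D.V} (hv : v ≠ r)
    {x : D.E} (hx : x ∈ T) (hfx : D.first x = v) : x = tEdge hT hv :=
  ((tree_edge_unique hT hv).unique ⟨hx, hfx⟩ ⟨tEdge_mem hT hv, tEdge_first hT hv⟩)

theorem tree_edge_surj (hT : D.IsOrientedSpanningTree T r) :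
    ∀ x, ∀ hx : x ∈ T, x = tEdge hT (tree_no_edge_at_root hT x hx) := by
  intro x hx
  exact tEdge_eq hT _ hx rfl

/-- Step relation toward the root in the tree. -/
def tstep (T : Set D.E) (r : D.V) : D.V → D.V → Prop :=
  fun a b => a ≠ r ∧ ∃ x ∈ T, D.first x = a ∧ D.last x = b

theorem tree_reach (hT : D.IsOrientedSpanningTree T r) (v : D.V) :
    Relation.ReflTransGen (tstep (D := D) T r) v r := by
  set A : Set D.V := {w | Relation.ReflTransGen (tstep (D := D) T r) w r} with hA
  have hr : r ∈ A := Relation.ReflTransGen.refl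
  have hadj : ∀ a b, D.Adj T a b → (a ∈ A ↔ b ∈ A) := by
    intro a b ⟨x, hxT, hx⟩
    have key : ∀ c d : D.V, D.first x = c → D.last x = d → (c ∈ A ↔ d ∈ A) := by
      intro c d hc hd
      have hcr : c ≠ r := hc ▸ tree_no_edge_at_root hT x hxT
      have hstep : tstep (D := D) T r c d := ⟨hcr, x, hxT, hc, hd⟩
      constructor
      · intro hcA
        rcases hcA.cases_head with heq | ⟨w, hw, hwr⟩
        · exact absurd heq hcr
        · obtain ⟨-, y, hyT, hyc, hyw⟩ := hw
          have hyx : y = x := by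
            rw [tree_edge_surj hT y hyT, tree_edge_surj hT x hxT]
            congr 1
            rw [hyc, hc]
          have hwd : w = d := by rw [← hyw, hyx, hd]
          rw [hwd] at hwr
          exact hwr
      · intro hdA
        exact Relation.ReflTransGen.head hstep hdA
    rcases hx with ⟨h1, h2⟩ | ⟨h1, h2⟩
    · exact key a b h1 h2
    · exact (key b a h1 h2).symm
  have hreach := hT.1.1 v r
  unfold Multidigraph.Reach at hreach
  induction hreach using Relation.ReflTransGen.head_induction_on with
  | refl => exact hr
  | head hab _ ih => exact (hadj _ _ hab).mpr ih

theorem adj_symm {a b : D.V} (h : D.Adj T a b) : D.Adj T b a := by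
  obtain ⟨x, hxT, hx⟩ := h
  exact ⟨x, hxT, hx.symm⟩

theorem reach_symm {a b : D.V} (h : D.Reach T a b) : D.Reach T b a := by
  induction h with
  | refl => exact Relation.ReflTransGen.refl
  | tail hab hbc ih => exact Relation.ReflTransGen.head (adj_symm hbc) ih

end TreeFacts

end BestProof

namespace BestProof
open Multidigraph Finset

section Greedy

variable {D : Multidigraph} {T : Set D.E} {e : D.E} {r : D.V} {g : RkFam D}

theorem rk_tree_edge (hOK : ∀ v, OK D e T v (g v)) {x : D.E} (hx : x ∈ T) :
    rk D g x = D.outdeg (D.first x) - 1 :=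
  (rk_eq D g rfl).trans ((hOK (D.first x)).2 x rfl hx)

theorem rk_e (hOK : ∀ v, OK D e T v (g v)) : rk D g e = 0 :=
  (rk_eq D g rfl).trans ((hOK (D.first e)).1 rfl)

theorem tree_edge_last (hT : D.IsOrientedSpanningTree T r) (he : D.first e = r)
    (hOK : ∀ v, OK D e T v (g v)) {k : ℕ} (h : Alive D e (rk D g) k)
    {v : D.V} (hv : v ≠ r) (hmem : tEdge hT hv ∈ (walk D e (rk D g) k).1) :
    Fout D v ⊆ (walk D e (rk D g) k).1 := by
  obtain ⟨j, hj, hcur⟩ := (used_eq_cur_image h _).mp hmem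
  have hj0 : j ≠ 0 := by
    intro h0
    rw [h0] at hcur
    have h1 : e = tEdge hT hv := hcur
    have h2 : v = r := by rw [← tEdge_first hT hv, ← h1, he]
    exact hv h2
  obtain ⟨j', rfl⟩ : ∃ j', j = j' + 1 := ⟨j - 1, (Nat.succ_pred_eq_of_pos (Nat.pos_of_ne_zero hj0)).symm⟩
  have hne := h j' (by omega)
  have hs := cur_succ_spec hne
  intro y hy
  have hyv : D.first y = v := (mem_Fout D).mp hy
  by_cases hyu : y ∈ (walk D e (rk D g) j').1
  · exact used_mono (by omega) hyu
  · have hycand : y ∈ cands D (walk D e (rk D g) j') := by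
      rw [mem_cands]
      refine ⟨?_, hyu⟩
      rw [hyv]
      have := ((mem_cands D).mp hs.1).1
      rw [hcur, tEdge_first] at this
      rw [this]
    have hmin := hs.2.1 y hycand
    rw [hcur] at hmin
    have hrk_t : rk D g (tEdge hT hv) = D.outdeg v - 1 := by
      rw [rk_tree_edge hOK (tEdge_mem hT hv), tEdge_first]
    have hrk_y : rk D g y < D.outdeg v := by
      have := rk_lt D g y
      rwa [hyv] at this
    have : rk D g y = rk D g (tEdge hT hv) := by omega
    have hyeq : y = tEdge hT hv := by
      apply rk_inj D (g := g) _ this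
      rw [hyv, tEdge_first]
    rw [hyeq]
    exact hmem

theorem stuck_lemma (hD : D.Eulerian) (hT : D.IsOrientedSpanningTree T r)
    (he : D.first e = r) (hOK : ∀ v, OK D e T v (g v)) {k : ℕ}
    (h : Alive D e (rk D g) k) (hstuck : ¬ (cands D (walk D e (rk D g) k)).Nonempty) :
    D.last (walk D e (rk D g) k).2 = r ∧ (walk D e (rk D g) k).1 = Finset.univ := by
  set p := walk D e (rk D g) k with hp
  set u := D.last p.2 with hu
  have hall_u : Fout D u ⊆ p.1 := by
    intro y hy
    by_contra hyn
    exact hstuck ⟨y, (mem_cands D).mpr ⟨(mem_Fout D).mp hy, hyn⟩⟩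
  have outFull : ∀ w : D.V, Fout D w ⊆ p.1 →
      (p.1.filter (fun x => D.first x = w)).card = D.outdeg w := by
    intro w hw
    refine le_antisymm (filter_used_le_out p w) ?_
    rw [← card_Fout]
    apply Finset.card_le_card
    intro x hx
    exact Finset.mem_filter.mpr ⟨hw hx, (mem_Fout D).mp hx⟩
  have hcount := walk_count (rank := rk D g) he h
  have hur : u = r := by
    by_contra hur
    have hc := hcount u
    rw [← hp] at hc
    rw [if_neg hur, if_pos hu] at hc
    have h1 : (p.1.filter (fun x => D.first x = u)).card = D.outdeg u := outFull u hall_u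
    have h2 := filter_used_le_in p u
    rw [hD.2 u] at h2
    omega
  have balance : ∀ v : D.V, (p.1.filter (fun x => D.last x = v)).card
      = (p.1.filter (fun x => D.first x = v)).card := by
    intro v
    have hc := hcount v
    rw [← hp, ← hu, hur] at hc
    by_cases hvr : v = r
    · omega
    · omega
  have allOut : ∀ v : D.V, Relation.ReflTransGen (tstep (D := D) T r) v r → Fout D v ⊆ p.1 := by
    intro v hv
    induction hv using Relation.ReflTransGen.head_induction_on with
    | refl => exact hur ▸ hall_u
    | @head a c hac _ ih =>
      obtain ⟨har, x, hxT, hxa, hxc⟩ := hac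
      have houtc : (p.1.filter (fun x => D.first x = c)).card = D.outdeg c := outFull c ih
      have hinc : (p.1.filter (fun x => D.last x = c)).card = D.indeg c := by
        rw [balance c, houtc, hD.2 c]
      have hx_used : x ∈ p.1 := in_used_all hinc ((mem_Fin' D).mpr hxc)
      have hxe : x = tEdge hT har := tEdge_eq hT har hxT hxa
      rw [hxe] at hx_used
      exact tree_edge_last hT he hOK h har hx_used
  refine ⟨hur, Finset.eq_univ_iff_forall.mpr ?_⟩
  intro x
  exact allOut (D.first x) (tree_reach hT (D.first x)) ((mem_Fout D).mpr rfl)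

theorem alive_all (hD : D.Eulerian) (hT : D.IsOrientedSpanningTree T r)
    (he : D.first e = r) (hOK : ∀ v, OK D e T v (g v)) :
    ∀ k, k ≤ Fintype.card D.E - 1 → Alive D e (rk D g) k := by
  intro k
  induction k with
  | zero => exact fun _ j hj => absurd hj (Nat.not_lt_zero j)
  | succ k ih =>
    intro hk1
    have hk : Alive D e (rk D g) k := ih (by omega)
    have hne : (cands D (walk D e (rk D g) k)).Nonempty := by
      by_contra hstuck
      have := (stuck_lemma hD hT he hOK hk hstuck).2
      have hcard := used_card hk
      rw [this, Finset.card_univ] at hcard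
      have hpos : 0 < Fintype.card D.E := Fintype.card_pos_iff.mpr ⟨e⟩
      omega
    intro j hj
    rcases Nat.lt_or_ge j k with h' | h'
    · exact hk j h'
    · have : j = k := by omega
      rw [this]
      exact hne

theorem final_state (hD : D.Eulerian) (hT : D.IsOrientedSpanningTree T r)
    (he : D.first e = r) (hOK : ∀ v, OK D e T v (g v)) :
    (walk D e (rk D g) (Fintype.card D.E - 1)).1 = Finset.univ ∧
      D.last (walk D e (rk D g) (Fintype.card D.E - 1)).2 = r := by
  have hpos : 0 < Fintype.card D.E := Fintype.card_pos_iff.mpr ⟨e⟩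
  have h := alive_all hD hT he hOK (Fintype.card D.E - 1) (le_refl _)
  have hcard := used_card h
  have huniv : (walk D e (rk D g) (Fintype.card D.E - 1)).1 = Finset.univ := by
    apply Finset.eq_univ_of_card
    rw [hcard]
    omega
  have hstuck : ¬ (cands D (walk D e (rk D g) (Fintype.card D.E - 1))).Nonempty := by
    rintro ⟨y, hy⟩
    have := (mem_cands D).mp hy
    rw [huniv] at this
    exact this.2 (Finset.mem_univ y)
  exact ⟨huniv, (stuck_lemma hD hT he hOK h hstuck).1⟩

/-- The tour function produced by the greedy walk. -/
noncomputable def tourFun (D : Multidigraph) (e : D.E) (rank : D.E → ℕ) :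
    Fin (Fintype.card D.E) → D.E := fun i => (walk D e rank i).2

theorem tourFun_bijective (hD : D.Eulerian) (hT : D.IsOrientedSpanningTree T r)
    (he : D.first e = r) (hOK : ∀ v, OK D e T v (g v)) :
    Function.Bijective (tourFun D e (rk D g)) := by
  have h := alive_all hD hT he hOK (Fintype.card D.E - 1) (le_refl _)
  rw [Fintype.bijective_iff_injective_and_card]
  refine ⟨?_, by rw [Fintype.card_fin]⟩
  intro i j hij
  by_contra hne
  rcases Nat.lt_or_ge i.1 j.1 with h' | h'
  · exact cur_inj h h' (by omega) hij
  · have : j.1 < i.1 := by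
      rcases Nat.lt_or_ge j.1 i.1 with h'' | h''
      · exact h''
      · exact absurd (Fin.ext (le_antisymm h'' h')) hne
    exact cur_inj h this (by omega) hij.symm

/-- The tour produced by the greedy walk. -/
noncomputable def tourEquiv (hD : D.Eulerian) (hT : D.IsOrientedSpanningTree T r)
    (he : D.first e = r) (hOK : ∀ v, OK D e T v (g v)) :
    Fin (Fintype.card D.E) ≃ D.E :=
  Equiv.ofBijective _ (tourFun_bijective hD hT he hOK)

theorem tourEquiv_is_tour (hD : D.Eulerian) (hT : D.IsOrientedSpanningTree T r)
    (he : D.first e = r) (hOK : ∀ v, OK D e T v (g v)) :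
    D.IsEulerianTour (tourEquiv hD hT he hOK) ∧ D.BeginsWith (tourEquiv hD hT he hOK) e := by
  have hpos : 0 < Fintype.card D.E := Fintype.card_pos_iff.mpr ⟨e⟩
  have h := alive_all hD hT he hOK (Fintype.card D.E - 1) (le_refl _)
  constructor
  · intro i
    have happ : ∀ j : Fin (Fintype.card D.E),
        tourEquiv hD hT he hOK j = (walk D e (rk D g) j).2 := fun _ => rfl
    rcases Nat.lt_or_ge (i.1 + 1) (Fintype.card D.E) with hlt | hge
    · have hcs : (cyclicSucc i).1 = i.1 + 1 := by
        simp [cyclicSucc, Nat.mod_eq_of_lt hlt]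
      rw [happ, happ]
      have hne : (cands D (walk D e (rk D g) i.1)).Nonempty := h i.1 (by omega)
      have := cur_first hne
      rw [hcs]
      exact this.symm
    · have hi : i.1 = Fintype.card D.E - 1 := by omega
      have hi1 : i.1 + 1 = Fintype.card D.E := by omega
      have hcs : (cyclicSucc i).1 = 0 := by simp [cyclicSucc, hi1]
      rw [happ, happ, hcs]
      have : (walk D e (rk D g) 0).2 = e := rfl
      rw [this, he, hi]
      exact (final_state hD hT he hOK).2
  · exact ⟨hpos, rfl⟩

end Greedy

end BestProof

namespace BestProof
open Multidigraph Finset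

section Inj

variable {D : Multidigraph} {T : Set D.E} {e : D.E} {r : D.V} {g : RkFam D}

theorem exit_order (hOK : ∀ v, OK D e T v (g v)) {k : ℕ} (h : Alive D e (rk D g) k) :
    ∀ i j, i < j → j ≤ k →
      D.first (walk D e (rk D g) i).2 = D.first (walk D e (rk D g) j).2 →
      rk D g (walk D e (rk D g) i).2 < rk D g (walk D e (rk D g) j).2 := by
  intro i j hij hjk hfirst
  have hne_ij : (walk D e (rk D g) i).2 ≠ (walk D e (rk D g) j).2 := cur_inj h hij hjk
  have hne_rk : rk D g (walk D e (rk D g) i).2 ≠ rk D g (walk D e (rk D g) j).2 :=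
    fun hc => hne_ij (rk_inj D hfirst hc)
  have hle : rk D g (walk D e (rk D g) i).2 ≤ rk D g (walk D e (rk D g) j).2 := by
    cases i with
    | zero =>
      have : (walk D e (rk D g) 0).2 = e := rfl
      rw [this, rk_e hOK]
      exact Nat.zero_le _
    | succ m =>
      have hne_m : (cands D (walk D e (rk D g) m)).Nonempty := h m (by omega)
      have hs := cur_succ_spec hne_m
      apply hs.2.1
      rw [mem_cands]
      constructor
      · rw [← cur_first hne_m, ← hfirst]
      · intro hmem
        obtain ⟨l, hl, hcl⟩ := (used_eq_cur_image (alive_mono h (by omega : m ≤ k)) _).mp hmem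
        exact cur_inj h (show l < j by omega) hjk hcl
  omega

/-- The data: an oriented spanning tree together with admissible rank functions. -/
def DataT (D : Multidigraph) (e : D.E) (r : D.V) : Type :=
  Σ _T : {T : Set D.E // D.IsOrientedSpanningTree T r},
    ∀ v : D.V, {gv : {x : D.E // D.first x = v} ≃ Fin (D.outdeg v) // OK D e _T.1 v gv}

/-- The greedy map from data to Eulerian tours. -/
noncomputable def Fmap (hD : D.Eulerian) (he : D.first e = r) (d : DataT D e r) :
    {σ : Fin (Fintype.card D.E) ≃ D.E // D.IsEulerianTour σ ∧ D.BeginsWith σ e} :=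
  ⟨tourEquiv hD d.1.2 he (fun v => (d.2 v).2), tourEquiv_is_tour hD d.1.2 he (fun v => (d.2 v).2)⟩

theorem tree_characterization (hD : D.Eulerian) (hT : D.IsOrientedSpanningTree T r)
    (he : D.first e = r) (hOK : ∀ v, OK D e T v (g v)) (x : D.E) :
    x ∈ T ↔ (D.first x ≠ r ∧ rk D g x = D.outdeg (D.first x) - 1) := by
  constructor
  · intro hx
    exact ⟨tree_no_edge_at_root hT x hx, rk_tree_edge hOK hx⟩
  · rintro ⟨hxr, hxrk⟩
    have hrk_t : rk D g (tEdge hT hxr) = D.outdeg (D.first x) - 1 := by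
      rw [rk_tree_edge hOK (tEdge_mem hT hxr), tEdge_first]
    have : x = tEdge hT hxr := by
      apply rk_inj D (g := g)
      · rw [tEdge_first]
      · rw [hxrk, hrk_t]
    rw [this]
    exact tEdge_mem hT hxr

theorem Fmap_injective (hD : D.Eulerian) (he : D.first e = r) :
    Function.Injective (Fmap (D := D) (e := e) (r := r) hD he) := by
  rintro ⟨⟨T1, hT1⟩, f1⟩ ⟨⟨T2, hT2⟩, f2⟩ heq
  have hσ : tourEquiv hD hT1 he (fun v => (f1 v).2) = tourEquiv hD hT2 he (fun v => (f2 v).2) :=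
    congrArg Subtype.val heq
  set g1 : RkFam D := fun v => (f1 v).1 with hg1
  set g2 : RkFam D := fun v => (f2 v).1 with hg2
  have hOK1 : ∀ v, OK D e T1 v (g1 v) := fun v => (f1 v).2
  have hOK2 : ∀ v, OK D e T2 v (g2 v) := fun v => (f2 v).2
  have hcur : ∀ i : Fin (Fintype.card D.E),
      (walk D e (rk D g1) i.1).2 = (walk D e (rk D g2) i.1).2 := by
    intro i
    have := congrFun (congrArg (fun (q : Fin (Fintype.card D.E) ≃ D.E) =>
      (q : Fin (Fintype.card D.E) → D.E)) hσ) i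
    exact this
  have hpos : 0 < Fintype.card D.E := Fintype.card_pos_iff.mpr ⟨e⟩
  have halive1 := alive_all hD hT1 he hOK1 (Fintype.card D.E - 1) (le_refl _)
  have halive2 := alive_all hD hT2 he hOK2 (Fintype.card D.E - 1) (le_refl _)
  -- index of an edge in the tour
  set σ := tourEquiv hD hT1 he (fun v => (f1 v).2) with hσ1
  have hσapp : ∀ i : Fin (Fintype.card D.E), σ i = (walk D e (rk D g1) i.1).2 := fun _ => rfl
  have hidx1 : ∀ x : D.E, (walk D e (rk D g1) (σ.symm x).1).2 = x := by
    intro x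
    have := σ.apply_symm_apply x
    rw [hσapp] at this
    exact this
  have hidx2 : ∀ x : D.E, (walk D e (rk D g2) (σ.symm x).1).2 = x := by
    intro x
    rw [← hcur]
    exact hidx1 x
  -- both rank families are compatible with the temporal order of σ
  have horder : ∀ (g' : RkFam D) (T' : Set D.E), (∀ v, OK D e T' v (g' v)) →
      Alive D e (rk D g') (Fintype.card D.E - 1) →
      (∀ x : D.E, (walk D e (rk D g') (σ.symm x).1).2 = x) →
      ∀ x y : D.E, D.first x = D.first y →
        (((σ.symm x) : ℕ) < ((σ.symm y) : ℕ) ↔ rk D g' x < rk D g' y) := by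
    intro g' T' hOK' halive' hidx' x y hfxy
    constructor
    · intro hlt
      have := exit_order hOK' halive' (σ.symm x).1 (σ.symm y).1 hlt (by omega)
        (by rw [hidx' x, hidx' y]; exact hfxy)
      rwa [hidx' x, hidx' y] at this
    · intro hlt
      rcases Nat.lt_trichotomy ((σ.symm x) : ℕ) ((σ.symm y) : ℕ) with h' | h' | h'
      · exact h'
      · exfalso
        have hxy' : σ.symm x = σ.symm y := Fin.ext h'
        have : x = y := by
          rw [← hidx' x, ← hidx' y, hxy']
        rw [this] at hlt
        omega
      · exfalso
        have := exit_order hOK' halive' (σ.symm y).1 (σ.symm x).1 h' (by omega)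
          (by rw [hidx' x, hidx' y]; exact hfxy.symm)
        rw [hidx' x, hidx' y] at this
        omega
  have hg12 : g1 = g2 := by
    funext v
    apply equiv_fin_order_unique
    intro x y
    by_cases hxy : x = y
    · rw [hxy]; simp
    have hfxy : D.first x.1 = D.first y.1 := by rw [x.2, y.2]
    have h1 := horder g1 T1 hOK1 halive1 hidx1 x.1 y.1 hfxy
    have h2 := horder g2 T2 hOK2 halive2 hidx2 x.1 y.1 hfxy
    have e1 : rk D g1 x.1 = ((g1 v x) : ℕ) := by
      rw [rk_eq D g1 x.2]
    have e2 : rk D g1 y.1 = ((g1 v y) : ℕ) := by rw [rk_eq D g1 y.2]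
    have e3 : rk D g2 x.1 = ((g2 v x) : ℕ) := by rw [rk_eq D g2 x.2]
    have e4 : rk D g2 y.1 = ((g2 v y) : ℕ) := by rw [rk_eq D g2 y.2]
    constructor
    · intro hlt
      have : rk D g1 x.1 < rk D g1 y.1 := by rw [e1, e2]; exact hlt
      have := h2.mp (h1.mpr this)
      rw [e3, e4] at this
      exact this
    · intro hlt
      have : rk D g2 x.1 < rk D g2 y.1 := by rw [e3, e4]; exact hlt
      have := h1.mp (h2.mpr this)
      rw [e1, e2] at this
      exact this
  have hT12 : T1 = T2 := by
    ext x
    rw [tree_characterization hD hT1 he hOK1 x, tree_characterization hD hT2 he hOK2 x, hg12]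
  subst hT12
  have hf12 : f1 = f2 := by
    funext v
    apply Subtype.ext
    have := congrFun hg12 v
    exact this
  subst hf12
  rfl

end Inj

end BestProof

namespace BestProof
open Multidigraph Finset

section Surj

variable {D : Multidigraph} {e : D.E} {r : D.V}

/-- Indices (in `Fin n`) of the out-edges at `v`, under the tour `σ`. -/
noncomputable def sFS (σ : Fin (Fintype.card D.E) ≃ D.E) (v : D.V) :
    Finset (Fin (Fintype.card D.E)) := (Fout D v).image (fun x => σ.symm x)

theorem card_sFS (σ : Fin (Fintype.card D.E) ≃ D.E) (v : D.V) :
    (sFS (D := D) σ v).card = D.outdeg v := by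
  rw [sFS, Finset.card_image_of_injective _ σ.symm.injective, card_Fout]

/-- The rank function at `v` induced by the temporal order of the tour `σ`. -/
noncomputable def sRk (σ : Fin (Fintype.card D.E) ≃ D.E) (v : D.V) :
    {x : D.E // D.first x = v} ≃ Fin (D.outdeg v) where
  toFun x := (Finset.orderIsoOfFin (sFS (D := D) σ v) (card_sFS σ v)).symm
    ⟨σ.symm x.1, Finset.mem_image_of_mem _ ((mem_Fout D).mpr x.2)⟩
  invFun i := ⟨σ ((Finset.orderIsoOfFin (sFS (D := D) σ v) (card_sFS σ v)) i).1, by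
    have hmem := ((Finset.orderIsoOfFin (sFS (D := D) σ v) (card_sFS σ v)) i).2
    obtain ⟨y, hy, hyi⟩ := Finset.mem_image.mp hmem
    rw [← hyi, Equiv.apply_symm_apply]
    exact (mem_Fout D).mp hy⟩
  left_inv x := by
    apply Subtype.ext
    simp
  right_inv i := by
    rw [OrderIso.symm_apply_eq]
    exact Subtype.ext (by simp)

theorem sRk_lt_iff (σ : Fin (Fintype.card D.E) ≃ D.E) (v : D.V)
    (x y : {z : D.E // D.first z = v}) :
    sRk (D := D) σ v x < sRk (D := D) σ v y ↔ σ.symm x.1 < σ.symm y.1 := by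
  rw [show sRk (D := D) σ v x = (Finset.orderIsoOfFin _ (card_sFS σ v)).symm
      ⟨σ.symm x.1, Finset.mem_image_of_mem _ ((mem_Fout D).mpr x.2)⟩ from rfl]
  rw [show sRk (D := D) σ v y = (Finset.orderIsoOfFin _ (card_sFS σ v)).symm
      ⟨σ.symm y.1, Finset.mem_image_of_mem _ ((mem_Fout D).mpr y.2)⟩ from rfl]
  rw [OrderIso.lt_iff_lt]
  exact Iff.rfl

theorem sRk_le_iff (σ : Fin (Fintype.card D.E) ≃ D.E) (v : D.V)
    (x y : {z : D.E // D.first z = v}) :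
    sRk (D := D) σ v x ≤ sRk (D := D) σ v y ↔ σ.symm x.1 ≤ σ.symm y.1 := by
  have h := sRk_lt_iff (D := D) σ v y x
  constructor
  · intro hle
    exact not_lt.mp (fun hc => absurd (h.mpr hc) (not_lt.mpr hle))
  · intro hle
    exact not_lt.mp (fun hc => absurd (h.mp hc) (not_lt.mpr hle))

/-- The "last exit" tree extracted from a tour. -/
def sTree (σ : Fin (Fintype.card D.E) ≃ D.E) (r : D.V) : Set D.E :=
  {x | D.first x ≠ r ∧ ∀ y, D.first y = D.first x → σ.symm y ≤ σ.symm x}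

theorem exists_max_out (hD : D.Eulerian) (he : D.first e = r)
    (σ : Fin (Fintype.card D.E) ≃ D.E) (v : D.V) :
    ∃ x, D.first x = v ∧ ∀ y, D.first y = v → σ.symm y ≤ σ.symm x := by
  obtain ⟨x0, hx0⟩ := exists_out hD he v
  obtain ⟨x, hx, hmax⟩ := Finset.exists_max_image (Fout D v) (fun z => σ.symm z)
    ⟨x0, (mem_Fout D).mpr hx0⟩
  exact ⟨x, (mem_Fout D).mp hx, fun y hy => hmax y ((mem_Fout D).mpr hy)⟩

theorem sTree_unique (σ : Fin (Fintype.card D.E) ≃ D.E) {x y : D.E}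
    (hx : x ∈ sTree (D := D) σ r) (hy : y ∈ sTree (D := D) σ r)
    (hfxy : D.first x = D.first y) : x = y := by
  have h1 := hx.2 y hfxy.symm
  have h2 := hy.2 x hfxy
  have : σ.symm x = σ.symm y := le_antisymm h2 h1
  exact σ.symm.injective this

theorem sTree_spanning_aux (hD : D.Eulerian) (he : D.first e = r)
    {σ : Fin (Fintype.card D.E) ≃ D.E} (htour : D.IsEulerianTour σ)
    (hσ0 : ∀ h0 : 0 < Fintype.card D.E, σ ⟨0, h0⟩ = e) :
    ∀ v : D.V, D.Reach (sTree (D := D) σ r) v r := by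
  have hpos : 0 < Fintype.card D.E := Fintype.card_pos_iff.mpr ⟨e⟩
  have key : ∀ m : ℕ, ∀ v : D.V, v ≠ r →
      (∀ x, D.first x = v → (∀ y, D.first y = v → σ.symm y ≤ σ.symm x) →
        Fintype.card D.E - (σ.symm x).1 ≤ m) →
      D.Reach (sTree (D := D) σ r) v r := by
    intro m
    induction m with
    | zero =>
      intro v hv hbound
      obtain ⟨x, hx, hmax⟩ := exists_max_out hD he σ v
      have := hbound x hx hmax
      have := (σ.symm x).2
      omega
    | succ m ih =>
      intro v hv hbound
      obtain ⟨x, hx, hmax⟩ := exists_max_out hD he σ v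
      have hxT : x ∈ sTree (D := D) σ r := ⟨hx ▸ hv, fun y hy => hmax y (by rw [← hx]; exact hy)⟩
      set w := D.last x with hw
      have hadj : D.Adj (sTree (D := D) σ r) v w := ⟨x, hxT, Or.inl ⟨hx, rfl⟩⟩
      by_cases hwr : w = r
      · exact Relation.ReflTransGen.head hadj (hwr ▸ Relation.ReflTransGen.refl)
      · refine Relation.ReflTransGen.head hadj ?_
        set i := σ.symm x with hi
        have hcase : i.1 + 1 < Fintype.card D.E := by
          rcases Nat.lt_or_ge (i.1 + 1) (Fintype.card D.E) with h' | h'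
          · exact h'
          · exfalso
            have hi1 : i.1 + 1 = Fintype.card D.E := by
              have := i.2; omega
            have htc := htour i
            have hcs : cyclicSucc i = ⟨0, hpos⟩ := by
              apply Fin.ext
              simp [cyclicSucc, hi1]
            rw [hcs, hσ0 hpos, he] at htc
            rw [Equiv.apply_symm_apply] at htc
            exact hwr (hw ▸ htc)
        have htc := htour i
        have hcs : cyclicSucc i = ⟨i.1 + 1, hcase⟩ := by
          apply Fin.ext
          simp [cyclicSucc, Nat.mod_eq_of_lt hcase]
        rw [hcs] at htc
        rw [Equiv.apply_symm_apply] at htc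
        -- htc : D.last x = D.first (σ ⟨i.1+1, _⟩)
        apply ih w hwr
        intro z hz hmaxz
        have hy : D.first (σ ⟨i.1 + 1, hcase⟩) = w := htc.symm
        have := hmaxz (σ ⟨i.1 + 1, hcase⟩) hy
        rw [Equiv.symm_apply_apply] at this
        have hzlt := (σ.symm z).2
        have : (i.1 + 1 : ℕ) ≤ (σ.symm z).1 := this
        have hb := hbound x hx hmax
        omega
  intro v
  by_cases hvr : v = r
  · exact hvr ▸ Relation.ReflTransGen.refl
  · apply key (Fintype.card D.E) v hvr
    intro x hx hmax
    omega

end Surj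

end BestProof

namespace BestProof
open Multidigraph Finset

section Surj2

variable {D : Multidigraph} {e : D.E} {r : D.V}

theorem outdeg_pos_of_mem {v : D.V} (x : D.E) (hx : D.first x = v) : 0 < D.outdeg v := by
  rw [Multidigraph.outdeg]
  exact Nat.card_pos_iff.mpr ⟨⟨⟨x, hx⟩⟩, inferInstance⟩

theorem sTree_is_tree (hD : D.Eulerian) (he : D.first e = r)
    {σ : Fin (Fintype.card D.E) ≃ D.E} (htour : D.IsEulerianTour σ)
    (hσ0 : ∀ h0 : 0 < Fintype.card D.E, σ ⟨0, h0⟩ = e) :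
    D.IsOrientedSpanningTree (sTree (D := D) σ r) r := by
  have hreach := sTree_spanning_aux hD he htour hσ0
  refine ⟨⟨?_, ?_⟩, by simp, ?_, ?_⟩
  · -- spanning
    intro a b
    exact (hreach a).trans (reach_symm (hreach b))
  · -- cardinality
    have hbij : Function.Bijective (fun x : {x : D.E // x ∈ sTree (D := D) σ r} =>
        (⟨D.first x.1, x.2.1⟩ : {v : D.V // v ≠ r})) := by
      constructor
      · intro x y hxy
        exact Subtype.ext (sTree_unique σ x.2 y.2 (congrArg Subtype.val hxy))
      · intro v
        obtain ⟨x, hx, hmax⟩ := exists_max_out hD he σ v.1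
        refine ⟨⟨x, ⟨hx ▸ v.2, fun y hy => hmax y (by rw [← hx]; exact hy)⟩⟩, ?_⟩
        exact Subtype.ext hx
    have h1 : Nat.card (sTree (D := D) σ r) = Nat.card {v : D.V // v ≠ r} :=
      Nat.card_congr (Equiv.ofBijective _ hbij)
    rw [h1, Nat.card_eq_fintype_card, Nat.card_eq_fintype_card]
    have h2 : Fintype.card {v : D.V // ¬ (v = r)} = Fintype.card D.V - 1 := by
      rw [Fintype.card_subtype_compl, Fintype.card_subtype_eq]
    exact h2
  · -- outdegRev = 1 away from the root
    intro v hv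
    rw [outdegRev_empty]
    rw [Nat.card_eq_one_iff_unique]
    constructor
    · refine ⟨fun x y => ?_⟩
      apply Subtype.ext
      exact sTree_unique σ x.2.1 y.2.1 (x.2.2.trans y.2.2.symm)
    · obtain ⟨x, hx, hmax⟩ := exists_max_out hD he σ v
      exact ⟨⟨x, ⟨hx ▸ hv, fun y hy => hmax y (by rw [← hx]; exact hy)⟩, hx⟩⟩
  · -- outdegRev = 0 at the root
    rw [outdegRev_empty]
    haveI : IsEmpty {x : D.E // x ∈ sTree (D := D) σ r ∧ D.first x = r} :=
      ⟨fun x => x.2.1.1 x.2.2⟩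
    exact Nat.card_of_isEmpty

theorem sRk_OK (he : D.first e = r)
    {σ : Fin (Fintype.card D.E) ≃ D.E}
    (hσ0 : ∀ h0 : 0 < Fintype.card D.E, σ ⟨0, h0⟩ = e) (v : D.V) :
    OK D e (sTree (D := D) σ r) v (sRk (D := D) σ v) := by
  have hpos : 0 < Fintype.card D.E := Fintype.card_pos_iff.mpr ⟨e⟩
  constructor
  · intro hx
    have hse : σ.symm e = ⟨0, hpos⟩ := by
      rw [← hσ0 hpos, Equiv.symm_apply_apply]
    have hmin : ∀ j : Fin (D.outdeg v), sRk (D := D) σ v ⟨e, hx⟩ ≤ j := by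
      intro j
      have hj : sRk (D := D) σ v ((sRk (D := D) σ v).symm j) = j :=
        (sRk (D := D) σ v).apply_symm_apply j
      rw [← hj, sRk_le_iff, hse]
      exact Fin.mk_le_of_le_val (Nat.zero_le _)
    have hv0 := hmin ⟨0, outdeg_pos_of_mem (D := D) e hx⟩
    have hval : ((sRk (D := D) σ v ⟨e, hx⟩ : Fin (D.outdeg v)) : ℕ) ≤ 0 := hv0
    omega
  · intro x hx hxT
    have hdpos : 0 < D.outdeg v := outdeg_pos_of_mem (D := D) x hx
    have hmax : ∀ j : Fin (D.outdeg v), j ≤ sRk (D := D) σ v ⟨x, hx⟩ := by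
      intro j
      have hj : sRk (D := D) σ v ((sRk (D := D) σ v).symm j) = j :=
        (sRk (D := D) σ v).apply_symm_apply j
      rw [← hj, sRk_le_iff]
      apply hxT.2
      rw [((sRk (D := D) σ v).symm j).2, hx]
    have h1 := hmax ⟨D.outdeg v - 1, by omega⟩
    have h2 := (sRk (D := D) σ v ⟨x, hx⟩).2
    have h3 : D.outdeg v - 1 ≤ (sRk (D := D) σ v ⟨x, hx⟩ : ℕ) := h1
    omega

theorem walk_reconstruct (hD : D.Eulerian) (he : D.first e = r)
    {σ : Fin (Fintype.card D.E) ≃ D.E} (htour : D.IsEulerianTour σ)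
    (hσ0 : ∀ h0 : 0 < Fintype.card D.E, σ ⟨0, h0⟩ = e) :
    ∀ k, ∀ hk : k < Fintype.card D.E,
      (walk D e (rk D (fun v => sRk (D := D) σ v)) k).2 = σ ⟨k, hk⟩ ∧
      (walk D e (rk D (fun v => sRk (D := D) σ v)) k).1
        = Finset.univ.filter (fun x => ((σ.symm x) : ℕ) ≤ k) := by
  have hpos : 0 < Fintype.card D.E := Fintype.card_pos_iff.mpr ⟨e⟩
  set gσ : RkFam D := fun v => sRk (D := D) σ v with hgσ
  intro k
  induction k with
  | zero =>
    intro hk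
    constructor
    · exact (hσ0 hpos).symm ▸ rfl
    · ext x
      simp only [Finset.mem_filter, Finset.mem_univ, true_and]
      constructor
      · intro hx
        have hxe : x = e := Finset.mem_singleton.mp hx
        rw [hxe, ← hσ0 hpos, Equiv.symm_apply_apply]
      · intro hx
        have : σ.symm x = ⟨0, hpos⟩ := Fin.ext (Nat.le_zero.mp hx)
        have : x = σ ⟨0, hpos⟩ := by rw [← this, Equiv.apply_symm_apply]
        rw [this, hσ0 hpos]
        exact Finset.mem_singleton_self e
  | succ k ih =>
    intro hk1
    have hk : k < Fintype.card D.E := by omega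
    obtain ⟨hc, hu⟩ := ih hk
    set y0 := σ ⟨k + 1, hk1⟩ with hy0
    have htc := htour ⟨k, hk⟩
    have hcs : cyclicSucc (⟨k, hk⟩ : Fin (Fintype.card D.E)) = ⟨k + 1, hk1⟩ := by
      apply Fin.ext
      simp [cyclicSucc, Nat.mod_eq_of_lt hk1]
    rw [hcs] at htc
    -- htc : D.last (σ ⟨k, hk⟩) = D.first y0
    have hy0sym : σ.symm y0 = ⟨k + 1, hk1⟩ := by rw [hy0, Equiv.symm_apply_apply]
    have hy0ni : y0 ∉ (walk D e (rk D gσ) k).1 := by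
      rw [hu]
      simp only [Finset.mem_filter, Finset.mem_univ, true_and]
      rw [hy0sym]
      exact (by omega : ¬ (k + 1 ≤ k))
    have hcand : y0 ∈ cands D (walk D e (rk D gσ) k) := by
      rw [mem_cands]
      exact ⟨by rw [hc]; exact htc.symm, hy0ni⟩
    have hne : (cands D (walk D e (rk D gσ) k)).Nonempty := ⟨y0, hcand⟩
    have hs := cur_succ_spec hne
    set y := (walk D e (rk D gσ) (k + 1)).2 with hy
    have hyc := (mem_cands D).mp hs.1
    have hfy : D.first y = D.first y0 := by
      rw [hyc.1, hc]
      exact htc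
    have hyni : ¬ ((σ.symm y : ℕ) ≤ k) := by
      intro hcontra
      apply hyc.2
      rw [hu]
      simp only [Finset.mem_filter, Finset.mem_univ, true_and]
      exact hcontra
    have hrk1 : rk D gσ y0 ≤ rk D gσ y := by
      rw [rk_eq D gσ (rfl : D.first y0 = D.first y0),
        rk_eq D gσ (hfy : D.first y = D.first y0)]
      have hle : σ.symm y0 ≤ σ.symm y := by
        rw [hy0sym]
        exact Fin.mk_le_of_le_val (by omega)
      exact (sRk_le_iff (D := D) σ (D.first y0) ⟨y0, rfl⟩ ⟨y, hfy⟩).mpr hle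
    have hrk2 : rk D gσ y ≤ rk D gσ y0 := hs.2.1 y0 hcand
    have hyy0 : y = y0 := rk_inj D hfy (le_antisymm hrk2 hrk1)
    constructor
    · exact hyy0
    · rw [hs.2.2, hu]
      ext x
      simp only [Finset.mem_insert, Finset.mem_filter, Finset.mem_univ, true_and]
      constructor
      · rintro (hx | hx)
        · have hsx : σ.symm x = ⟨k + 1, hk1⟩ := by rw [hx, hyy0, hy0sym]
          rw [hsx]
        · omega
      · intro hx
        rcases Nat.lt_or_ge (σ.symm x : ℕ) (k + 1) with h' | h'
        · exact Or.inr (by omega)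
        · left
          have hsx : σ.symm x = ⟨k + 1, hk1⟩ :=
            Fin.ext (show (σ.symm x).1 = k + 1 by omega)
          rw [hyy0, hy0]
          rw [← hsx, Equiv.apply_symm_apply]

theorem Fmap_surjective (hD : D.Eulerian) (he : D.first e = r) :
    Function.Surjective (Fmap (D := D) (e := e) (r := r) hD he) := by
  rintro ⟨σ, htour, hbegin⟩
  have hpos : 0 < Fintype.card D.E := Fintype.card_pos_iff.mpr ⟨e⟩
  have hσ0 : ∀ h0 : 0 < Fintype.card D.E, σ ⟨0, h0⟩ = e := by
    obtain ⟨hp, hs⟩ := hbegin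
    exact fun _ => hs
  refine ⟨⟨⟨sTree (D := D) σ r, sTree_is_tree hD he htour hσ0⟩,
    fun v => ⟨sRk (D := D) σ v, sRk_OK he hσ0 v⟩⟩, ?_⟩
  apply Subtype.ext
  apply Equiv.ext
  intro i
  have := (walk_reconstruct hD he htour hσ0 i.1 i.2).1
  exact this
end Surj2

end BestProof

namespace BestProof
open Multidigraph Finset

section Count

variable {D : Multidigraph} {e : D.E} {r : D.V}

theorem card_OK (he : D.first e = r) {T : Set D.E} (hT : D.IsOrientedSpanningTree T r)
    (v : D.V) :
    Nat.card {gv : {x : D.E // D.first x = v} ≃ Fin (D.outdeg v) // OK D e T v gv}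
      = Nat.factorial (D.outdeg v - 1) := by
  have hcard : Fintype.card {x : D.E // D.first x = v} = D.outdeg v :=
    (Nat.card_eq_fintype_card (α := {x : D.E // D.first x = v})).symm
  by_cases hv : v = r
  · subst hv
    have hdr : 0 < D.outdeg v := outdeg_pos_of_mem (D := D) e he
    have hiff : ∀ gv : {x : D.E // D.first x = v} ≃ Fin (D.outdeg v),
        OK D e T v gv ↔ gv ⟨e, he⟩ = ⟨0, hdr⟩ := by
      intro gv
      constructor
      · intro h
        exact Fin.ext (h.1 he)
      · intro h
        constructor
        · intro hx
          rw [show (⟨e, hx⟩ : {x : D.E // D.first x = v}) = ⟨e, he⟩ from rfl, h]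
        · intro x hx hxT
          exact absurd hx (tree_no_edge_at_root hT x hxT)
    rw [Nat.card_congr (Equiv.subtypeEquivRight hiff)]
    exact card_equiv_fix hcard ⟨e, he⟩ ⟨0, hdr⟩
  · have hdv : 0 < D.outdeg v := outdeg_pos_of_mem (D := D) (tEdge hT hv) (tEdge_first hT hv)
    have hiff : ∀ gv : {x : D.E // D.first x = v} ≃ Fin (D.outdeg v),
        OK D e T v gv ↔ gv ⟨tEdge hT hv, tEdge_first hT hv⟩ = ⟨D.outdeg v - 1, by omega⟩ := by
      intro gv
      constructor
      · intro h
        exact Fin.ext (h.2 (tEdge hT hv) (tEdge_first hT hv) (tEdge_mem hT hv))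
      · intro h
        constructor
        · intro hx
          exact absurd (hx.symm.trans he) hv
        · intro x hx hxT
          have hxe : x = tEdge hT hv := tEdge_eq hT hv hxT hx
          have : (⟨x, hx⟩ : {z : D.E // D.first z = v})
              = ⟨tEdge hT hv, tEdge_first hT hv⟩ := Subtype.ext hxe
          rw [this, h]
    rw [Nat.card_congr (Equiv.subtypeEquivRight hiff)]
    exact card_equiv_fix hcard _ _

theorem card_DataT (hD : D.Eulerian) (he : D.first e = r) :
    Nat.card (DataT D e r)
      = Nat.card {T : Set D.E // D.IsOrientedSpanningTree T r}
          * ∏ u : D.V, Nat.factorial (D.outdeg u - 1) := by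
  classical
  letI fI : Fintype {T : Set D.E // D.IsOrientedSpanningTree T r} := Fintype.ofFinite _
  letI fB : ∀ T : {T : Set D.E // D.IsOrientedSpanningTree T r},
      Fintype (∀ v : D.V, {gv : {x : D.E // D.first x = v} ≃ Fin (D.outdeg v) //
        OK D e T.1 v gv}) := fun T => Fintype.ofFinite _
  have h1 : Nat.card (DataT D e r)
      = ∑ T : {T : Set D.E // D.IsOrientedSpanningTree T r},
          Nat.card (∀ v : D.V, {gv : {x : D.E // D.first x = v} ≃ Fin (D.outdeg v) //
            OK D e T.1 v gv}) := by
    rw [show DataT D e r = (Σ T : {T : Set D.E // D.IsOrientedSpanningTree T r},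
      ∀ v : D.V, {gv : {x : D.E // D.first x = v} ≃ Fin (D.outdeg v) //
        OK D e T.1 v gv}) from rfl]
    rw [Nat.card_eq_fintype_card, Fintype.card_sigma]
    exact Finset.sum_congr rfl fun T _ => (Nat.card_eq_fintype_card).symm
  rw [h1]
  have h2 : ∀ T : {T : Set D.E // D.IsOrientedSpanningTree T r},
      Nat.card (∀ v : D.V, {gv : {x : D.E // D.first x = v} ≃ Fin (D.outdeg v) //
        OK D e T.1 v gv}) = ∏ u : D.V, Nat.factorial (D.outdeg u - 1) := by
    intro T
    rw [Nat.card_pi]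
    exact Finset.prod_congr rfl fun v _ => card_OK he T.2 v
  rw [Finset.sum_congr rfl fun T _ => h2 T, Finset.sum_const, smul_eq_mul,
    Finset.card_univ, Nat.card_eq_fintype_card]

end Count

end BestProof


/-- BEST theorem: the number of Eulerian tours of `D` beginning
with a fixed edge `e` with initial vertex `r` equals the number of oriented
spanning trees of `D` rooted at `r` times `∏_u (outdeg(u) - 1)!`. -/
theorem stmt14 (D : Multidigraph) (hD : D.Eulerian) (e : D.E) (r : D.V)
    (he : D.first e = r) :
    Nat.card {σ : Fin (Fintype.card D.E) ≃ D.E //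
        D.IsEulerianTour σ ∧ D.BeginsWith σ e} =
      Nat.card {T : Set D.E // D.IsOrientedSpanningTree T r} *
        ∏ u : D.V, Nat.factorial (D.outdeg u - 1) := by
  
  have hbij : Function.Bijective (BestProof.Fmap (D := D) (e := e) (r := r) hD he) :=
    ⟨BestProof.Fmap_injective hD he, BestProof.Fmap_surjective hD he⟩
  rw [← Nat.card_eq_of_bijective _ hbij]
  exact BestProof.card_DataT hD he
end
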